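/- arXiv:1501.01120 — 8 statements merged into one kernel-verified Lean document; each statement's English description precedes it below -/
import Mathlib

section
/- If k and j are non-negative integers with j ≤ 2^k, then either α(j) ≤ ⌈k/2⌉ or α(2^k − j) ≤ ⌈k/2⌉. -/
/-- α(i) is the number of ones in the binary representation of i. -/
def binOnes (i : ℕ) : ℕ := (Nat.digits 2 i).count 1

lemma binOnes_zero : binOnes 0 = 0 := by simp [binOnes]

lemma binOnes_one : binOnes 1 = 1 := by simp [binOnes]

lemma binOnes_two_mul (n : ℕ) : binOnes (2 * n) = binOnes n := by
  rcases Nat.eq_zero_or_pos n with h | h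
  · simp [h]
  · unfold binOnes
    rw [Nat.digits_def' (by norm_num : 1 < 2) (by omega)]
    simp [Nat.mul_mod_right, Nat.mul_div_cancel_left _ (by norm_num : 0 < 2)]

lemma binOnes_two_mul_add_one (n : ℕ) : binOnes (2 * n + 1) = binOnes n + 1 := by
  unfold binOnes
  rw [Nat.digits_def' (by norm_num : 1 < 2) (by omega)]
  have h1 : (2 * n + 1) % 2 = 1 := by omega
  have h2 : (2 * n + 1) / 2 = n := by omega
  rw [h1, h2]
  simp

lemma binOnes_compl (k : ℕ) : ∀ m, m < 2 ^ k → binOnes m + binOnes (2 ^ k - 1 - m) = k := by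
  induction k with
  | zero =>
    intro m hm
    interval_cases m
    simp [binOnes_zero]
  | succ k ih =>
    intro m hm
    have hp : 0 < 2 ^ k := Nat.pow_pos (by norm_num)
    rcases Nat.even_or_odd m with ⟨a, ha⟩ | ⟨a, ha⟩
    · have ha2 : a < 2 ^ k := by rw [pow_succ] at hm; omega
      have h1 : 2 ^ (k + 1) - 1 - m = 2 * (2 ^ k - 1 - a) + 1 := by
        rw [pow_succ]; omega
      have h2 : m = 2 * a := by omega
      rw [h1, h2, binOnes_two_mul, binOnes_two_mul_add_one]
      have := ih a ha2
      omega
    · have ha2 : a < 2 ^ k := by rw [pow_succ] at hm; omega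
      have h1 : 2 ^ (k + 1) - 1 - m = 2 * (2 ^ k - 1 - a) := by
        rw [pow_succ]; omega
      have h2 : m = 2 * a + 1 := by omega
      rw [h1, h2, binOnes_two_mul, binOnes_two_mul_add_one]
      have := ih a ha2
      omega

lemma binOnes_sum_le (k : ℕ) : ∀ j ≤ 2 ^ k, binOnes j + binOnes (2 ^ k - j) ≤ k + 1 := by
  induction k with
  | zero =>
    intro j hj
    interval_cases j <;> simp [binOnes_zero, binOnes_one]
  | succ k ih =>
    intro j hj
    have hp : 0 < 2 ^ k := Nat.pow_pos (by norm_num)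
    rcases Nat.even_or_odd j with ⟨a, ha⟩ | ⟨a, ha⟩
    · have ha2 : a ≤ 2 ^ k := by rw [pow_succ] at hj; omega
      have h1 : 2 ^ (k + 1) - j = 2 * (2 ^ k - a) := by rw [pow_succ]; omega
      have h2 : j = 2 * a := by omega
      rw [h1, h2, binOnes_two_mul, binOnes_two_mul]
      have := ih a ha2
      omega
    · have ha2 : a < 2 ^ k := by rw [pow_succ] at hj; omega
      have h1 : 2 ^ (k + 1) - j = 2 * (2 ^ k - 1 - a) + 1 := by
        rw [pow_succ]; omega
      have h2 : j = 2 * a + 1 := by omega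
      rw [h1, h2, binOnes_two_mul_add_one, binOnes_two_mul_add_one]
      have := binOnes_compl k a ha2
      omega

theorem stmt_2 (k j : ℕ) (hj : j ≤ 2 ^ k) :
    binOnes j ≤ (k + 1) / 2 ∨ binOnes (2 ^ k - j) ≤ (k + 1) / 2 := by
  have h := binOnes_sum_le k j hj
  omega
end

section
/- For every j with 0 ≤ j ≤ 2^k, the initial segment {0, …, j−1} or its complement {j, …, 2^k−1} in {0, …, 2^k−1} can be written as a union of at most ⌈k/2⌉ dyadic intervals. -/
/-- A dyadic interval of {0, …, 2^k − 1}. -/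
def IsDyadic (k : ℕ) (D : Finset ℕ) : Prop :=
  ∃ m s : ℕ, (m + 1) * 2 ^ s ≤ 2 ^ k ∧ D = Finset.Ico (m * 2 ^ s) ((m + 1) * 2 ^ s)

/-- `S` is a union of `c` dyadic intervals of level `k`. -/
def DyCover (k c : ℕ) (S : Finset ℕ) : Prop :=
  ∃ I : Fin c → Finset ℕ, (∀ a, IsDyadic k (I a)) ∧ Finset.univ.biUnion I = S

lemma isDyadic_mono {k : ℕ} {D : Finset ℕ} (h : IsDyadic k D) : IsDyadic (k + 1) D := by
  obtain ⟨m, s, h1, h2⟩ := h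
  exact ⟨m, s, h1.trans (Nat.pow_le_pow_right (by norm_num) (Nat.le_succ k)), h2⟩

lemma dyCover_empty (k : ℕ) : DyCover k 0 ∅ :=
  ⟨Fin.elim0, fun a => a.elim0, by simp⟩

lemma dyCover_mono {k c : ℕ} {S : Finset ℕ} (h : DyCover k c S) : DyCover (k + 1) c S := by
  obtain ⟨I, h1, h2⟩ := h
  exact ⟨I, fun a => isDyadic_mono (h1 a), h2⟩

lemma dyCover_cons {k c : ℕ} {S D : Finset ℕ} (h : DyCover k c S) (hD : IsDyadic k D) :
    DyCover k (c + 1) (D ∪ S) := by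
  obtain ⟨I, h1, h2⟩ := h
  refine ⟨Fin.cons D I, ?_, ?_⟩
  · intro a
    refine Fin.cases ?_ ?_ a <;> simp [hD, h1]
  · ext x
    simp only [Finset.mem_biUnion, Finset.mem_univ, true_and, Finset.mem_union,
      Fin.exists_fin_succ, Fin.cons_zero, Fin.cons_succ]
    rw [← h2]
    simp

lemma dyCover_single {k : ℕ} {D : Finset ℕ} (hD : IsDyadic k D) : DyCover k 1 D := by
  have := dyCover_cons (dyCover_empty k) hD
  rwa [Finset.union_empty] at this

lemma isDyadic_shift {k : ℕ} {D : Finset ℕ} (h : IsDyadic k D) :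
    IsDyadic (k + 1) (D.image (· + 2 ^ k)) := by
  obtain ⟨m, s, h1, h2⟩ := h
  have hsk : s ≤ k := by
    have h2s : 2 ^ s ≤ 2 ^ k := le_trans (Nat.le_mul_of_pos_left _ (by omega)) h1
    exact (Nat.pow_le_pow_iff_right (by norm_num)).mp h2s
  have hks : 2 ^ (k - s) * 2 ^ s = 2 ^ k := by
    rw [← pow_add]; congr 1; omega
  refine ⟨m + 2 ^ (k - s), s, ?_, ?_⟩
  · have e : (m + 2 ^ (k - s) + 1) * 2 ^ s = (m + 1) * 2 ^ s + 2 ^ k := by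
      rw [← hks]; ring
    rw [e, pow_succ]
    omega
  · rw [h2, Finset.image_add_right_Ico]
    congr 1
    · rw [← hks]; ring
    · rw [← hks]; ring

lemma dyCover_shift {k c : ℕ} {S : Finset ℕ} (h : DyCover k c S) :
    DyCover (k + 1) c (S.image (· + 2 ^ k)) := by
  obtain ⟨I, h1, h2⟩ := h
  refine ⟨fun a => (I a).image (· + 2 ^ k), fun a => isDyadic_shift (h1 a), ?_⟩
  ext x
  simp only [Finset.mem_biUnion, Finset.mem_univ, true_and, Finset.mem_image, ← h2]
  tauto

lemma isDyadic_range (k : ℕ) : IsDyadic k (Finset.range (2 ^ k)) :=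
  ⟨0, k, by omega, by rw [Finset.range_eq_Ico]; norm_num⟩

lemma isDyadic_upper (k : ℕ) : IsDyadic (k + 1) (Finset.Ico (2 ^ k) (2 ^ (k + 1))) :=
  ⟨1, k, by rw [pow_succ]; omega, by rw [one_mul, pow_succ]; congr 1; ring⟩

lemma dyadic_aux : ∀ k j : ℕ, 0 < j → j < 2 ^ k →
    ∃ c₁ c₂ : ℕ, c₁ + c₂ ≤ k + 1 ∧ DyCover k c₁ (Finset.range j) ∧
      DyCover k c₂ (Finset.Ico j (2 ^ k)) := by
  intro k
  induction k with
  | zero => intro j h1 h2; omega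
  | succ k ih =>
    intro j h1 h2
    rcases lt_trichotomy j (2 ^ k) with hlt | heq | hgt
    · obtain ⟨c₁, c₂, hc, hC1, hC2⟩ := ih j h1 hlt
      refine ⟨c₁, c₂ + 1, by omega, dyCover_mono hC1, ?_⟩
      have hsplit : Finset.Ico j (2 ^ (k + 1)) =
          Finset.Ico (2 ^ k) (2 ^ (k + 1)) ∪ Finset.Ico j (2 ^ k) := by
        rw [Finset.union_comm, Finset.Ico_union_Ico_eq_Ico hlt.le
          (Nat.pow_le_pow_right (by norm_num) (Nat.le_succ k))]
      rw [hsplit]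
      exact dyCover_cons (dyCover_mono hC2) (isDyadic_upper k)
    · subst heq
      refine ⟨1, 1, by omega, ?_, ?_⟩
      · exact dyCover_mono (dyCover_single (isDyadic_range k))
      · exact dyCover_single (isDyadic_upper k)
    · set j' := j - 2 ^ k with hj'
      have hj'pos : 0 < j' := by omega
      have hj'lt : j' < 2 ^ k := by rw [pow_succ] at h2; omega
      obtain ⟨c₁, c₂, hc, hC1, hC2⟩ := ih j' hj'pos hj'lt
      refine ⟨c₁ + 1, c₂, by omega, ?_, ?_⟩
      · have e1 : Finset.range j =
            Finset.range (2 ^ k) ∪ (Finset.range j').image (· + 2 ^ k) := by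
          rw [Finset.range_eq_Ico, Finset.range_eq_Ico, Finset.range_eq_Ico, Finset.image_add_right_Ico,
            zero_add, Finset.Ico_union_Ico_eq_Ico (Nat.zero_le _) (by omega)]
          congr 1
          omega
        rw [e1]
        exact dyCover_cons (dyCover_shift hC1) (isDyadic_mono (isDyadic_range k))
      · have e2 : Finset.Ico j (2 ^ (k + 1)) = (Finset.Ico j' (2 ^ k)).image (· + 2 ^ k) := by
          rw [Finset.image_add_right_Ico]
          congr 1
          · omega
          · rw [pow_succ]; ring
        rw [e2]
        exact dyCover_shift hC2

theorem stmt_4 (k j : ℕ) (hj : j ≤ 2 ^ k) :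
    ∃ c : ℕ, c ≤ (k + 1) / 2 ∧
      ∃ I : Fin c → Finset ℕ, (∀ a, IsDyadic k (I a)) ∧
        (Finset.univ.biUnion I = Finset.range j ∨
         Finset.univ.biUnion I = Finset.Ico j (2 ^ k)) := by
  rcases Nat.eq_zero_or_pos j with rfl | hpos
  · obtain ⟨I, h1, h2⟩ := dyCover_empty k
    exact ⟨0, by omega, I, h1, Or.inl (by simp [h2])⟩
  rcases eq_or_lt_of_le hj with rfl | hlt
  · obtain ⟨I, h1, h2⟩ := dyCover_empty k
    exact ⟨0, by omega, I, h1, Or.inr (by simp [h2])⟩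
  obtain ⟨c₁, c₂, hc, ⟨I₁, hI₁, hU₁⟩, ⟨I₂, hI₂, hU₂⟩⟩ := dyadic_aux k j hpos hlt
  rcases le_total c₁ c₂ with hle | hle
  · exact ⟨c₁, by omega, I₁, hI₁, Or.inl hU₁⟩
  · exact ⟨c₂, by omega, I₂, hI₂, Or.inr hU₂⟩
end

section
/- Let V₁, …, Vₙ be finite-dimensional vector spaces and t ∈ V₁ ⊗ ⋯ ⊗ Vₙ. Suppose A', A'' ⊆ {1,…,n} are disjoint, t = t' ⊗ t'' ⊗ x where t' ∈ ⊗_{l∈B'} V_l, t'' ∈ ⊗_{l∈B''} V_l for disjoint sets B' ⊇ A', B'' ⊇ A'' with B' ∩ A'' = B'' ∩ A' = ∅, and x is a nonzero simple tensor x = ⊗_{l∉B'∪B''} x_l. If the flattening rank of t' with respect to A' is q' and the flattening rank of t'' with respect to A'' is q'', then the flattening rank of t with respect to A' ∪ A'' ∪ C equals q'·q'' for any subset C ⊆ {1,…,n} \ (B' ∪ B''). -/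
/-- The flattening of a tensor `t ∈ V₁ ⊗ ⋯ ⊗ Vₙ` (given in coordinates, `V_i = 𝕜^{d i}`)
with respect to a subset `S` of the factors: the matrix of the linear map
`(⊗_{l∈S} V_l)* → ⊗_{l∉S} V_l` obtained by contraction with `t`. -/
def flattening {𝕜 : Type*} [Field 𝕜] {ι : Type*} [Fintype ι] [DecidableEq ι]
    (d : ι → ℕ) (S : Finset ι) (t : (∀ i, Fin (d i)) → 𝕜) :
    Matrix (∀ i : {i // i ∈ S}, Fin (d i.1)) (∀ i : {i // i ∉ S}, Fin (d i.1)) 𝕜 :=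
  fun a b => t fun i => if h : i ∈ S then a ⟨i, h⟩ else b ⟨i, h⟩

/-- The flattening rank of a tensor with respect to a subset `S` of the factors. -/
noncomputable def flatteningRank {𝕜 : Type*} [Field 𝕜] {ι : Type*} [Fintype ι] [DecidableEq ι]
    (d : ι → ℕ) (S : Finset ι) (t : (∀ i, Fin (d i)) → 𝕜) : ℕ :=
  (flattening d S t).rank

open Matrix Kronecker Module

section Aux
variable {𝕜 : Type*} [Field 𝕜]

theorem aux_rank_submatrix {m n m' n' : Type*} [Fintype n] [Fintype n']
    (A : Matrix m n 𝕜) (e₁ : m' ≃ m) (e₂ : n' ≃ n) :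
    (A.submatrix e₁ e₂).rank = A.rank := by
  rw [show A.submatrix ⇑e₁ ⇑e₂ = Matrix.reindex e₁.symm e₂.symm A from rfl, Matrix.rank,
    Matrix.rank, Matrix.mulVecLin_reindex, LinearMap.range_comp, LinearMap.range_comp,
    LinearEquiv.range, Submodule.map_top, LinearEquiv.finrank_map_eq]

theorem aux_finrank_range_map {M N M' N' : Type*} [AddCommGroup M] [Module 𝕜 M]
    [AddCommGroup N] [Module 𝕜 N] [AddCommGroup M'] [Module 𝕜 M'] [AddCommGroup N'] [Module 𝕜 N']
    (f : M →ₗ[𝕜] M') (g : N →ₗ[𝕜] N') :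
    finrank 𝕜 (LinearMap.range (TensorProduct.map f g)) =
      finrank 𝕜 (LinearMap.range f) * finrank 𝕜 (LinearMap.range g) := by
  have h1 : TensorProduct.map f g =
      (TensorProduct.mapIncl (LinearMap.range f) (LinearMap.range g)).comp
        (TensorProduct.map f.rangeRestrict g.rangeRestrict) := by
    rw [TensorProduct.mapIncl, ← TensorProduct.map_comp]
    congr 1
  have hsurj : Function.Surjective (TensorProduct.map f.rangeRestrict g.rangeRestrict) :=
    TensorProduct.map_surjective f.surjective_rangeRestrict g.surjective_rangeRestrict
  have hinj : Function.Injective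
      (TensorProduct.mapIncl (LinearMap.range f) (LinearMap.range g)) :=
    Module.Flat.tensorProduct_mapIncl_injective_of_right _ _
  rw [h1, LinearMap.range_comp, LinearMap.range_eq_top.2 hsurj, Submodule.map_top,
    LinearMap.finrank_range_of_inj hinj, finrank_tensorProduct]

theorem aux_rank_kronecker {m n p q : Type*} [Fintype m] [Fintype n] [Fintype p] [Fintype q]
    [DecidableEq n] [DecidableEq q]
    (A : Matrix m n 𝕜) (B : Matrix p q 𝕜) :
    (A ⊗ₖ B).rank = A.rank * B.rank := by
  rw [Matrix.rank_eq_finrank_range_toLin (A ⊗ₖ B)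
      ((Pi.basisFun 𝕜 m).tensorProduct (Pi.basisFun 𝕜 p))
      ((Pi.basisFun 𝕜 n).tensorProduct (Pi.basisFun 𝕜 q)),
    Matrix.toLin_kronecker, aux_finrank_range_map,
    Matrix.rank_eq_finrank_range_toLin A (Pi.basisFun 𝕜 m) (Pi.basisFun 𝕜 n),
    Matrix.rank_eq_finrank_range_toLin B (Pi.basisFun 𝕜 p) (Pi.basisFun 𝕜 q)]

theorem aux_rank_vecMulVec {m n : Type*} [Fintype m] [Fintype n] [DecidableEq n]
    {u : m → 𝕜} {w : n → 𝕜} (hu : u ≠ 0) (hw : w ≠ 0) :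
    (Matrix.vecMulVec u w).rank = 1 := by
  refine le_antisymm ?_ ?_
  · rw [Matrix.vecMulVec_eq Unit]
    exact (Matrix.rank_mul_le_left _ _).trans
      ((Matrix.rank_le_card_width _).trans Fintype.card_unit.le)
  · obtain ⟨i, hi⟩ := Function.ne_iff.1 hu
    obtain ⟨j, hj⟩ := Function.ne_iff.1 hw
    rw [Nat.one_le_iff_ne_zero]
    intro h0
    rw [Matrix.rank, Submodule.finrank_eq_zero, LinearMap.range_eq_bot] at h0
    have h := congrFun (congrFun (congrArg DFunLike.coe h0) (Pi.single j 1)) i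
    rw [Matrix.mulVecLin_apply, Matrix.mulVec_single] at h
    simp only [Pi.smul_apply, MulOpposite.op_one, one_smul, Matrix.col_apply,
      Matrix.vecMulVec_apply, mul_one, LinearMap.zero_apply, Pi.zero_apply] at h
    exact mul_ne_zero hi hj h

end Aux

set_option maxHeartbeats 1000000
open Matrix Kronecker Module

section Equivs
variable {n : ℕ} (d : Fin n → ℕ) (B' B'' A' A'' C : Finset (Fin n))

/-- Reindexing of the rows of the big flattening. -/
def rowEquiv (hBdisj : Disjoint B' B'') (hA' : A' ⊆ B') (hA'' : A'' ⊆ B'')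
    (hC : C ⊆ (B' ∪ B'')ᶜ) :
    ((∀ j : {j : {i // i ∈ B'} // j ∈ A'.subtype (· ∈ B')}, Fin (d j.1.1)) ×
     (∀ j : {j : {i // i ∈ B''} // j ∈ A''.subtype (· ∈ B'')}, Fin (d j.1.1))) ×
    (∀ j : {j // j ∈ C}, Fin (d j.1)) ≃ (∀ i : {i // i ∈ A' ∪ A'' ∪ C}, Fin (d i.1)) where
  toFun p i :=
    if h1 : i.1 ∈ A' then p.1.1 ⟨⟨i.1, hA' h1⟩, Finset.mem_subtype.2 h1⟩
    else if h2 : i.1 ∈ A'' then p.1.2 ⟨⟨i.1, hA'' h2⟩, Finset.mem_subtype.2 h2⟩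
    else p.2 ⟨i.1, by
      have hm := i.2
      simp only [Finset.mem_union] at hm
      tauto⟩
  invFun a :=
    ((fun j => a ⟨j.1.1,
        Finset.mem_union_left _ (Finset.mem_union_left _ (Finset.mem_subtype.1 j.2))⟩,
      fun j => a ⟨j.1.1,
        Finset.mem_union_left _ (Finset.mem_union_right _ (Finset.mem_subtype.1 j.2))⟩),
     fun j => a ⟨j.1, Finset.mem_union_right _ j.2⟩)
  left_inv p := by
    have hc : ∀ i ∈ C, i ∉ B' ∪ B'' := fun i h => Finset.mem_compl.1 (hC h)
    refine Prod.ext (Prod.ext ?_ ?_) ?_ <;> funext j <;> dsimp only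
    · rw [dif_pos (Finset.mem_subtype.1 j.2)]
    · rw [dif_neg (fun h => Finset.disjoint_left.1 hBdisj (hA' h)
          (hA'' (Finset.mem_subtype.1 j.2))), dif_pos (Finset.mem_subtype.1 j.2)]
    · rw [dif_neg (fun h => hc _ j.2 (Finset.mem_union_left _ (hA' h))),
        dif_neg (fun h => hc _ j.2 (Finset.mem_union_right _ (hA'' h)))]
  right_inv a := by
    funext i
    dsimp only
    by_cases h1 : i.1 ∈ A'
    · rw [dif_pos h1]
    · by_cases h2 : i.1 ∈ A''
      · rw [dif_neg h1, dif_pos h2]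
      · rw [dif_neg h1, dif_neg h2]

/-- Reindexing of the columns of the big flattening. -/
def colEquiv (hBdisj : Disjoint B' B'') (hA' : A' ⊆ B') (hA'' : A'' ⊆ B'')
    (hC : C ⊆ (B' ∪ B'')ᶜ) :
    ((∀ j : {j : {i // i ∈ B'} // j ∉ A'.subtype (· ∈ B')}, Fin (d j.1.1)) ×
     (∀ j : {j : {i // i ∈ B''} // j ∉ A''.subtype (· ∈ B'')}, Fin (d j.1.1))) ×
    (∀ j : {j // j ∈ (B' ∪ B'')ᶜ \ C}, Fin (d j.1)) ≃
    (∀ i : {i // i ∉ A' ∪ A'' ∪ C}, Fin (d i.1)) where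
  toFun p i :=
    if h1 : i.1 ∈ B' then p.1.1 ⟨⟨i.1, h1⟩, by
      intro hm
      rw [Finset.mem_subtype] at hm
      exact i.2 (Finset.mem_union_left _ (Finset.mem_union_left _ hm))⟩
    else if h2 : i.1 ∈ B'' then p.1.2 ⟨⟨i.1, h2⟩, by
      intro hm
      rw [Finset.mem_subtype] at hm
      exact i.2 (Finset.mem_union_left _ (Finset.mem_union_right _ hm))⟩
    else p.2 ⟨i.1, Finset.mem_sdiff.2 ⟨Finset.mem_compl.2 (by
        simp only [Finset.mem_union]; tauto),
      fun hcmem => i.2 (Finset.mem_union_right _ hcmem)⟩⟩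
  invFun b :=
    ((fun j => b ⟨j.1.1, fun hS => by
        have hb' : j.1.1 ∈ B' := j.1.2
        have hna : j.1.1 ∉ A' := fun h => j.2 (Finset.mem_subtype.2 h)
        simp only [Finset.mem_union] at hS
        rcases hS with (h | h) | h
        · exact hna h
        · exact Finset.disjoint_left.1 hBdisj hb' (hA'' h)
        · exact Finset.mem_compl.1 (hC h) (Finset.mem_union_left _ hb')⟩,
      fun j => b ⟨j.1.1, fun hS => by
        have hb : j.1.1 ∈ B'' := j.1.2
        have hna : j.1.1 ∉ A'' := fun h => j.2 (Finset.mem_subtype.2 h)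
        simp only [Finset.mem_union] at hS
        rcases hS with (h | h) | h
        · exact Finset.disjoint_left.1 hBdisj (hA' h) hb
        · exact hna h
        · exact Finset.mem_compl.1 (hC h) (Finset.mem_union_right _ hb)⟩),
     fun j => b ⟨j.1, fun hS => by
        have hj := Finset.mem_sdiff.1 j.2
        have hcomp := Finset.mem_compl.1 hj.1
        simp only [Finset.mem_union] at hS hcomp
        rcases hS with (h | h) | h
        · exact hcomp (Or.inl (hA' h))
        · exact hcomp (Or.inr (hA'' h))
        · exact hj.2 h⟩)
  left_inv p := by
    refine Prod.ext (Prod.ext ?_ ?_) ?_ <;> funext j <;> dsimp only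
    · rw [dif_pos j.1.2]
    · rw [dif_neg (fun h => Finset.disjoint_left.1 hBdisj h j.1.2), dif_pos j.1.2]
    · have hj := Finset.mem_sdiff.1 j.2
      have hcomp := Finset.mem_compl.1 hj.1
      simp only [Finset.mem_union, not_or] at hcomp
      rw [dif_neg hcomp.1, dif_neg hcomp.2]
  right_inv b := by
    funext i
    dsimp only
    by_cases h1 : i.1 ∈ B'
    · rw [dif_pos h1]
    · by_cases h2 : i.1 ∈ B''
      · rw [dif_neg h1, dif_pos h2]
      · rw [dif_neg h1, dif_neg h2]

end Equivs

theorem stmt_8 {𝕜 : Type*} [Field 𝕜] (n : ℕ) (d : Fin n → ℕ)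
    (B' B'' A' A'' C : Finset (Fin n))
    (hBdisj : Disjoint B' B'') (hA' : A' ⊆ B') (hA'' : A'' ⊆ B'')
    (hC : C ⊆ (B' ∪ B'')ᶜ)
    (t' : (∀ i : {i // i ∈ B'}, Fin (d i.1)) → 𝕜)
    (t'' : (∀ i : {i // i ∈ B''}, Fin (d i.1)) → 𝕜)
    (x : ∀ i : Fin n, Fin (d i) → 𝕜) (hx : ∀ i ∉ B' ∪ B'', x i ≠ 0)
    (t : (∀ i, Fin (d i)) → 𝕜)
    (ht : t = fun v =>
      t' (fun i => v i.1) * t'' (fun i => v i.1) * ∏ i ∈ (B' ∪ B'')ᶜ, x i (v i))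
    (q' q'' : ℕ)
    (hq' : flatteningRank (fun i : {i // i ∈ B'} => d i.1) (A'.subtype (· ∈ B')) t' = q')
    (hq'' : flatteningRank (fun i : {i // i ∈ B''} => d i.1) (A''.subtype (· ∈ B'')) t'' = q'') :
    flatteningRank d (A' ∪ A'' ∪ C) t = q' * q'' := by
  subst ht
  unfold flatteningRank at hq' hq'' ⊢
  subst hq' hq''
  -- membership helpers
  have hS1 : ∀ i : Fin n, i ∈ A' → i ∈ A' ∪ A'' ∪ C := fun i h =>
    Finset.mem_union_left _ (Finset.mem_union_left _ h)
  have hS2 : ∀ i : Fin n, i ∈ A'' → i ∈ A' ∪ A'' ∪ C := fun i h =>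
    Finset.mem_union_left _ (Finset.mem_union_right _ h)
  have hS3 : ∀ i : Fin n, i ∈ C → i ∈ A' ∪ A'' ∪ C := fun i h => Finset.mem_union_right _ h
  have hCB : ∀ i ∈ C, i ∉ B' ∪ B'' := fun i h => Finset.mem_compl.1 (hC h)
  have hCnA : ∀ i ∈ C, i ∉ A' ∧ i ∉ A'' := fun i h =>
    ⟨fun h' => hCB i h (Finset.mem_union_left _ (hA' h')),
     fun h' => hCB i h (Finset.mem_union_right _ (hA'' h'))⟩
  have hnS1 : ∀ i ∈ B', i ∉ A' → i ∉ A' ∪ A'' ∪ C := by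
    intro i hb hna hmem
    simp only [Finset.mem_union] at hmem
    rcases hmem with (h | h) | h
    · exact hna h
    · exact Finset.disjoint_left.1 hBdisj hb (hA'' h)
    · exact hCB i h (Finset.mem_union_left _ hb)
  have hnS2 : ∀ i ∈ B'', i ∉ A'' → i ∉ A' ∪ A'' ∪ C := by
    intro i hb hna hmem
    simp only [Finset.mem_union] at hmem
    rcases hmem with (h | h) | h
    · exact Finset.disjoint_left.1 hBdisj (hA' h) hb
    · exact hna h
    · exact hCB i h (Finset.mem_union_right _ hb)
  have hnS3 : ∀ i ∈ (B' ∪ B'')ᶜ \ C, i ∉ A' ∪ A'' ∪ C := by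
    intro i hb hmem
    obtain ⟨hcomp, hnc⟩ := Finset.mem_sdiff.1 hb
    rw [Finset.mem_compl] at hcomp
    simp only [Finset.mem_union] at hmem
    rcases hmem with (h | h) | h
    · exact hcomp (Finset.mem_union_left _ (hA' h))
    · exact hcomp (Finset.mem_union_right _ (hA'' h))
    · exact hnc h
  have hEB : ∀ i ∈ (B' ∪ B'')ᶜ \ C, i ∉ B' ∪ B'' := fun i h =>
    Finset.mem_compl.1 (Finset.mem_sdiff.1 h).1
  set M' := flattening (fun i : {i // i ∈ B'} => d i.1) (A'.subtype (· ∈ B')) t' with hM'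
  set M'' := flattening (fun i : {i // i ∈ B''} => d i.1) (A''.subtype (· ∈ B'')) t'' with hM''
  set U : (∀ j : {j // j ∈ C}, Fin (d j.1)) → 𝕜 :=
    fun a => ∏ j ∈ C.attach, x j.1 (a j) with hU
  set W : (∀ j : {j // j ∈ (B' ∪ B'')ᶜ \ C}, Fin (d j.1)) → 𝕜 :=
    fun b => ∏ j ∈ ((B' ∪ B'')ᶜ \ C).attach, x j.1 (b j) with hW
  have hUne : U ≠ 0 := by
    have hxk : ∀ j : {j // j ∈ C}, ∃ v, x j.1 v ≠ 0 := fun j =>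
      Function.ne_iff.1 (hx j.1 (hCB j.1 j.2))
    choose a ha using hxk
    have : U a ≠ 0 := by
      rw [hU]
      exact Finset.prod_ne_zero_iff.2 fun j _ => ha j
    exact Function.ne_iff.2 ⟨a, this⟩
  have hWne : W ≠ 0 := by
    have hxk : ∀ j : {j // j ∈ (B' ∪ B'')ᶜ \ C}, ∃ v, x j.1 v ≠ 0 := fun j =>
      Function.ne_iff.1 (hx j.1 (hEB j.1 j.2))
    choose a ha using hxk
    have : W a ≠ 0 := by
      rw [hW]
      exact Finset.prod_ne_zero_iff.2 fun j _ => ha j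
    exact Function.ne_iff.2 ⟨a, this⟩
  set eR := rowEquiv d B' B'' A' A'' C hBdisj hA' hA'' hC with heR
  set eC := colEquiv d B' B'' A' A'' C hBdisj hA' hA'' hC with heC
  have hKey : (M' ⊗ₖ M'') ⊗ₖ Matrix.vecMulVec U W =
      (flattening d (A' ∪ A'' ∪ C) (fun v =>
        t' (fun i => v i.1) * t'' (fun i => v i.1) *
          ∏ i ∈ (B' ∪ B'')ᶜ, x i (v i))).submatrix eR eC := by
    ext p q
    obtain ⟨⟨a1, a2⟩, ac⟩ := p
    obtain ⟨⟨b1, b2⟩, bc⟩ := q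
    simp only [Matrix.kroneckerMap_apply, Matrix.submatrix_apply, Matrix.vecMulVec_apply,
      flattening, hM', hM'']
    congr 1
    · congr 1
      · congr 1
        funext j
        by_cases hj : j.1 ∈ A'
        · rw [dif_pos (Finset.mem_subtype.2 hj), dif_pos (hS1 j.1 hj)]
          simp only [heR, rowEquiv, Equiv.coe_fn_mk]
          rw [dif_pos hj]
        · rw [dif_neg (fun h => hj (Finset.mem_subtype.1 h)), dif_neg (hnS1 j.1 j.2 hj)]
          simp only [heC, colEquiv, Equiv.coe_fn_mk]
          rw [dif_pos j.2]
      · congr 1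
        funext j
        by_cases hj : j.1 ∈ A''
        · rw [dif_pos (Finset.mem_subtype.2 hj), dif_pos (hS2 j.1 hj)]
          simp only [heR, rowEquiv, Equiv.coe_fn_mk]
          rw [dif_neg (fun h => Finset.disjoint_left.1 hBdisj (hA' h) (hA'' hj)), dif_pos hj]
        · rw [dif_neg (fun h => hj (Finset.mem_subtype.1 h)), dif_neg (hnS2 j.1 j.2 hj)]
          simp only [heC, colEquiv, Equiv.coe_fn_mk]
          rw [dif_neg (fun h => Finset.disjoint_left.1 hBdisj h j.2), dif_pos j.2]
    · rw [← Finset.prod_sdiff hC, mul_comm (U ac)]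
      congr 1
      · rw [hW, ← Finset.prod_attach ((B' ∪ B'')ᶜ \ C)]
        refine Finset.prod_congr rfl fun j _ => ?_
        rw [dif_neg (hnS3 j.1 j.2)]
        simp only [heC, colEquiv, Equiv.coe_fn_mk]
        have h := Finset.mem_sdiff.1 j.2
        have hcomp := Finset.mem_compl.1 h.1
        simp only [Finset.mem_union, not_or] at hcomp
        rw [dif_neg hcomp.1, dif_neg hcomp.2]
      · rw [hU, ← Finset.prod_attach C]
        refine Finset.prod_congr rfl fun j _ => ?_
        rw [dif_pos (hS3 j.1 j.2)]
        simp only [heR, rowEquiv, Equiv.coe_fn_mk]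
        rw [dif_neg (hCnA j.1 j.2).1, dif_neg (hCnA j.1 j.2).2]
  rw [← aux_rank_submatrix (flattening d (A' ∪ A'' ∪ C) _) eR eC, ← hKey,
    aux_rank_kronecker, aux_rank_kronecker, aux_rank_vecMulVec hUne hWne, mul_one]
end

section
/- Let V₁, …, Vₙ (n = 2^k) be finite-dimensional vector spaces and let t ∈ V₁ ⊗ ⋯ ⊗ Vₙ be such that for every j with 0 ≤ j ≤ n, the flattening rank of t with respect to the initial segment {1, …, j} is at most r. Then for every dyadic interval D ⊆ {1, …, n}, the flattening rank of t with respect to D is at most r². (That is, TT(r, 2^k) ⊆ HF(r², k) for the left-to-right leaf ordering.) -/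
section Aux

open Matrix Module

variable {𝕜 : Type*} [Field 𝕜]

/-- Rectangular version of `Matrix.rank_submatrix`. -/
lemma rank_submatrix'' {m n m' n' : Type*} [Fintype m] [Fintype n] [Fintype m'] [Fintype n']
    (A : Matrix m n 𝕜) (e₁ : m' ≃ m) (e₂ : n' ≃ n) :
    (A.submatrix e₁ e₂).rank = A.rank := by
  rw [Matrix.rank, Matrix.rank, Matrix.mulVecLin_submatrix, LinearMap.range_comp,
    LinearMap.range_comp_of_range_eq_top _
      (LinearMap.range_eq_top.mpr (LinearMap.funLeft_surjective_of_injective 𝕜 𝕜 _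
        e₂.symm.injective)),
    show LinearMap.funLeft 𝕜 𝕜 (e₁ : m' → m)
      = (LinearEquiv.funCongrLeft 𝕜 𝕜 e₁ : (m → 𝕜) →ₗ[𝕜] (m' → 𝕜)) from rfl,
    LinearEquiv.finrank_map_eq]

/-- Any matrix factors through its column space, with the left factor itself a linear
combination of the columns. -/
lemma exists_factorization {m n : Type*} [Fintype m] [Fintype n] [DecidableEq n]
    (M : Matrix m n 𝕜) :
    ∃ (U : Matrix m (Fin M.rank) 𝕜) (V : Matrix (Fin M.rank) n 𝕜)
      (W : Matrix n (Fin M.rank) 𝕜), M = U * V ∧ U = M * W := by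
  set R := LinearMap.range M.mulVecLin with hR
  let b : Basis (Fin M.rank) 𝕜 R := Module.finBasisOfFinrankEq 𝕜 R rfl
  have hcol : ∀ j, (fun i => M i j) ∈ R := by
    intro j
    refine ⟨Pi.single j 1, ?_⟩
    ext i
    simp [Matrix.mulVecLin, Matrix.mulVec, dotProduct, Pi.single_apply]
  choose w hw using fun p => (b p).2
  refine ⟨Matrix.of fun i p => ((b p : R) : m → 𝕜) i, Matrix.of fun p j => b.repr ⟨_, hcol j⟩ p,
    Matrix.of fun j p => w p j, ?_, ?_⟩
  · ext i j
    have h2 := congrArg (fun v : R => (v : m → 𝕜) i) (b.sum_repr ⟨_, hcol j⟩)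
    simp only [Submodule.coe_sum, SetLike.val_smul, Finset.sum_apply, Pi.smul_apply,
      smul_eq_mul] at h2
    rw [Matrix.mul_apply, ← h2]
    exact Finset.sum_congr rfl fun p _ => (mul_comm _ _)
  · ext i p
    rw [Matrix.mul_apply, Matrix.of_apply, ← hw p]
    rfl

/-- The key rank inequality: if the two "nested" flattenings of a three-way tensor have
rank at most `r`, then the "middle" flattening has rank at most `r ^ 2`. -/
lemma key_rank {α β γ : Type*} [Fintype α] [Fintype β] [Fintype γ]
    [DecidableEq α] [DecidableEq β] [DecidableEq γ]
    (r : ℕ) (T : α → β → γ → 𝕜)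
    (h1 : (Matrix.of fun x (yz : β × γ) => T x yz.1 yz.2).rank ≤ r)
    (h2 : (Matrix.of fun (xy : α × β) z => T xy.1 xy.2 z).rank ≤ r) :
    (Matrix.of fun y (xz : α × γ) => T xz.1 y xz.2).rank ≤ r ^ 2 := by
  set M₁ : Matrix α (β × γ) 𝕜 := Matrix.of fun x (yz : β × γ) => T x yz.1 yz.2 with hM₁
  set M₂ : Matrix (α × β) γ 𝕜 := Matrix.of fun (xy : α × β) z => T xy.1 xy.2 z with hM₂
  obtain ⟨F, G, -, hFG, -⟩ := exists_factorization M₁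
  obtain ⟨U, V, W, hUV, hUW⟩ := exists_factorization M₂
  have e3 : ∀ x y c, T x y c = ∑ p, F x p * G p (y, c) := fun x y c => by
    have := congrFun (congrFun hFG x) (y, c)
    rw [Matrix.mul_apply] at this
    exact this
  have e1 : ∀ x y z, T x y z = ∑ q, U (x, y) q * V q z := fun x y z => by
    have := congrFun (congrFun hUV (x, y)) z
    rw [Matrix.mul_apply] at this
    exact this
  have e2 : ∀ x y q, U (x, y) q = ∑ c, T x y c * W c q := fun x y q => by
    have := congrFun (congrFun hUW (x, y)) q
    rw [Matrix.mul_apply] at this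
    exact this
  set H : Matrix β (Fin M₁.rank × Fin M₂.rank) 𝕜 :=
    Matrix.of fun y pq => ∑ c, G pq.1 (y, c) * W c pq.2 with hH
  set K : Matrix (Fin M₁.rank × Fin M₂.rank) (α × γ) 𝕜 :=
    Matrix.of fun pq xz => F xz.1 pq.1 * V pq.2 xz.2 with hK
  have hMHK : (Matrix.of fun y (xz : α × γ) => T xz.1 y xz.2) = H * K := by
    ext y ⟨x, z⟩
    rw [Matrix.mul_apply]
    simp only [Matrix.of_apply, hH, hK]
    rw [Fintype.sum_prod_type]
    calc T x y z = ∑ q, (∑ c, (∑ p, F x p * G p (y, c)) * W c q) * V q z := by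
          rw [e1 x y z]
          refine Finset.sum_congr rfl fun q _ => ?_
          rw [e2]
          congr 1
          exact Finset.sum_congr rfl fun c _ => by rw [e3]
      _ = ∑ q, ∑ c, ∑ p, F x p * G p (y, c) * W c q * V q z := by
          refine Finset.sum_congr rfl fun q _ => ?_
          rw [Finset.sum_mul]
          refine Finset.sum_congr rfl fun c _ => ?_
          rw [Finset.sum_mul, Finset.sum_mul]
      _ = ∑ q, ∑ p, ∑ c, F x p * G p (y, c) * W c q * V q z :=
          Finset.sum_congr rfl fun q _ => Finset.sum_comm
      _ = ∑ p, ∑ q, ∑ c, F x p * G p (y, c) * W c q * V q z := Finset.sum_comm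
      _ = ∑ p, ∑ q, (∑ c, G p (y, c) * W c q) * (F x p * V q z) := by
          refine Finset.sum_congr rfl fun p _ => Finset.sum_congr rfl fun q _ => ?_
          rw [Finset.sum_mul]
          exact Finset.sum_congr rfl fun c _ => by ring
  calc (Matrix.of fun y (xz : α × γ) => T xz.1 y xz.2).rank = (H * K).rank := by rw [hMHK]
    _ ≤ H.rank := Matrix.rank_mul_le_left H K
    _ ≤ Fintype.card (Fin M₁.rank × Fin M₂.rank) := Matrix.rank_le_card_width H
    _ = M₁.rank * M₂.rank := by simp
    _ ≤ r * r := Nat.mul_le_mul h1 h2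
    _ = r ^ 2 := (sq r).symm

/-- Renaming a Pi type over a subtype along an equivalent predicate. -/
def piRename {ι : Type*} (d : ι → ℕ) (p q : ι → Prop) (h : ∀ i, p i ↔ q i) :
    (∀ i : {i // p i}, Fin (d i.1)) ≃ (∀ i : {i // q i}, Fin (d i.1)) where
  toFun f i := f ⟨i.1, (h i.1).2 i.2⟩
  invFun f i := f ⟨i.1, (h i.1).1 i.2⟩
  left_inv _ := rfl
  right_inv _ := rfl

/-- Splitting a Pi type over a subtype along a disjoint union of predicates. -/
def piSplit {ι : Type*} (d : ι → ℕ) (p q u : ι → Prop) [DecidablePred p]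
    (h : ∀ i, u i ↔ p i ∨ q i) (hpq : ∀ i, p i → ¬ q i) :
    (∀ i : {i // u i}, Fin (d i.1)) ≃
      ((∀ i : {i // p i}, Fin (d i.1)) × (∀ i : {i // q i}, Fin (d i.1))) where
  toFun f := ⟨fun i => f ⟨i.1, (h i.1).2 (Or.inl i.2)⟩, fun i => f ⟨i.1, (h i.1).2 (Or.inr i.2)⟩⟩
  invFun x i :=
    if hp : p i.1 then x.1 ⟨i.1, hp⟩ else x.2 ⟨i.1, ((h i.1).1 i.2).resolve_left hp⟩
  left_inv f := by
    funext i
    dsimp only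
    split_ifs <;> rfl
  right_inv x := by
    refine Prod.ext ?_ ?_ <;> funext i <;> dsimp only
    · rw [dif_pos i.2]
    · rw [dif_neg (fun hp => hpq i.1 hp i.2)]

theorem main_aux {n : ℕ} (d : Fin n → ℕ) (r : ℕ)
    (t : (∀ i, Fin (d i)) → 𝕜) (a b : ℕ) (hab : a ≤ b)
    (hA : flatteningRank d (Finset.univ.filter fun i : Fin n => (i : ℕ) < a) t ≤ r)
    (hB : flatteningRank d (Finset.univ.filter fun i : Fin n => (i : ℕ) < b) t ≤ r) :
    flatteningRank d (Finset.univ.filter fun i : Fin n =>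
      a ≤ (i : ℕ) ∧ (i : ℕ) < b) t ≤ r ^ 2 := by
  classical
  set T : (∀ i : {i : Fin n // (i : ℕ) < a}, Fin (d i.1)) →
      (∀ i : {i : Fin n // a ≤ (i : ℕ) ∧ (i : ℕ) < b}, Fin (d i.1)) →
      (∀ i : {i : Fin n // b ≤ (i : ℕ)}, Fin (d i.1)) → 𝕜 :=
    fun x y z => t fun i =>
      if h1 : (i : ℕ) < a then x ⟨i, h1⟩
      else if h2 : (i : ℕ) < b then y ⟨i, ⟨le_of_not_gt h1, h2⟩⟩
      else z ⟨i, le_of_not_gt h2⟩ with hT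
  -- equivalences
  let eR₁ := (piRename d (fun i : Fin n => i ∈ Finset.univ.filter fun i : Fin n => (i : ℕ) < a)
    (fun i => (i : ℕ) < a) (by simp)).symm
  let eC₁ := (piSplit d (fun i : Fin n => a ≤ (i : ℕ) ∧ (i : ℕ) < b) (fun i => b ≤ (i : ℕ))
    (fun i => i ∉ Finset.univ.filter fun i : Fin n => (i : ℕ) < a)
    (by intro i; simp; omega) (by intro i h1 h2; omega)).symm
  let eR₂ := (piSplit d (fun i : Fin n => (i : ℕ) < a)
    (fun i => a ≤ (i : ℕ) ∧ (i : ℕ) < b)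
    (fun i => i ∈ Finset.univ.filter fun i : Fin n => (i : ℕ) < b)
    (by intro i; simp; omega) (by intro i h1 h2; omega)).symm
  let eC₂ := (piRename d (fun i : Fin n => b ≤ (i : ℕ))
    (fun i => i ∉ Finset.univ.filter fun i : Fin n => (i : ℕ) < b) (by simp)).symm.symm
  let eR₃ := (piRename d
    (fun i : Fin n => i ∈ Finset.univ.filter fun i : Fin n => a ≤ (i : ℕ) ∧ (i : ℕ) < b)
    (fun i => a ≤ (i : ℕ) ∧ (i : ℕ) < b) (by simp)).symm
  let eC₃ := (piSplit d (fun i : Fin n => (i : ℕ) < a) (fun i => b ≤ (i : ℕ))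
    (fun i => i ∉ Finset.univ.filter fun i : Fin n => a ≤ (i : ℕ) ∧ (i : ℕ) < b)
    (by intro i; simp; omega) (by intro i h1 h2; omega)).symm
  have claim1 : (Matrix.of fun x (yz : _ × _) => T x yz.1 yz.2)
      = (flattening d (Finset.univ.filter fun i : Fin n => (i : ℕ) < a) t).submatrix eR₁ eC₁ := by
    funext x yz
    show t _ = t _
    congr 1
    funext i
    simp only [flattening, piRename, piSplit, eR₁, eC₁, Equiv.symm_symm, Equiv.coe_fn_mk,
      Equiv.coe_fn_symm_mk, Matrix.submatrix_apply, Finset.mem_filter, Finset.mem_univ,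
      true_and]
    split_ifs <;> first | rfl | omega
  have claim2 : (Matrix.of fun (xy : _ × _) z => T xy.1 xy.2 z)
      = (flattening d (Finset.univ.filter fun i : Fin n => (i : ℕ) < b) t).submatrix eR₂ eC₂ := by
    funext xy z
    show t _ = t _
    congr 1
    funext i
    simp only [flattening, piRename, piSplit, eR₂, eC₂, Equiv.symm_symm, Equiv.coe_fn_mk,
      Equiv.coe_fn_symm_mk, Matrix.submatrix_apply, Finset.mem_filter, Finset.mem_univ,
      true_and]
    split_ifs <;> first | rfl | omega
  have claim3 : (Matrix.of fun y (xz : _ × _) => T xz.1 y xz.2)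
      = (flattening d (Finset.univ.filter fun i : Fin n =>
          a ≤ (i : ℕ) ∧ (i : ℕ) < b) t).submatrix eR₃ eC₃ := by
    funext y xz
    show t _ = t _
    congr 1
    funext i
    simp only [flattening, piRename, piSplit, eR₃, eC₃, Equiv.symm_symm, Equiv.coe_fn_mk,
      Equiv.coe_fn_symm_mk, Matrix.submatrix_apply, Finset.mem_filter, Finset.mem_univ,
      true_and]
    split_ifs <;> first | rfl | omega
  have h1 : (Matrix.of fun x (yz : _ × _) => T x yz.1 yz.2).rank ≤ r := by
    rw [claim1, rank_submatrix'']
    exact hA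
  have h2 : (Matrix.of fun (xy : _ × _) z => T xy.1 xy.2 z).rank ≤ r := by
    rw [claim2, rank_submatrix'']
    exact hB
  have := key_rank r T h1 h2
  rw [claim3, rank_submatrix''] at this
  exact this

end Aux

/-- TT(r, 2^k) ⊆ HF(r², k) for the left-to-right leaf ordering: if all flattening ranks of
`t` with respect to initial segments are at most `r`, then all flattening ranks of `t` with
respect to dyadic intervals are at most `r²`.  (Leaves are indexed by `Fin (2^k)`,
zero-based; the initial segment `{1, …, j}` is `{i | i < j}` and the dyadic interval
`{m·2^s + 1, …, (m+1)·2^s}` is `{i | m·2^s ≤ i < (m+1)·2^s}`.) -/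
theorem stmt_13 {𝕜 : Type*} [Field 𝕜] (k : ℕ) (d : Fin (2 ^ k) → ℕ) (r : ℕ)
    (t : (∀ i, Fin (d i)) → 𝕜)
    (ht : ∀ j ≤ 2 ^ k,
      flatteningRank d (Finset.univ.filter fun i : Fin (2 ^ k) => (i : ℕ) < j) t ≤ r) :
    ∀ m s : ℕ, (m + 1) * 2 ^ s ≤ 2 ^ k →
      flatteningRank d (Finset.univ.filter fun i : Fin (2 ^ k) =>
        m * 2 ^ s ≤ (i : ℕ) ∧ (i : ℕ) < (m + 1) * 2 ^ s) t ≤ r ^ 2 := by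
  intro m s hms
  exact main_aux d r t (m * 2 ^ s) ((m + 1) * 2 ^ s)
    (Nat.mul_le_mul_right _ (Nat.le_succ m))
    (ht _ (le_trans (Nat.mul_le_mul_right _ (Nat.le_succ m)) hms))
    (ht _ hms)
end

section
/- Let V₁, …, Vₙ (n = 2^k) be finite-dimensional vector spaces and let t ∈ V₁ ⊗ ⋯ ⊗ Vₙ be such that for every dyadic interval D ⊆ {1, …, n}, the flattening rank of t with respect to D is at most r. Then for every j with 0 ≤ j ≤ n, the flattening rank of t with respect to the initial segment {1, …, j} is at most r^{⌈k/2⌉}. (That is, HF(r, k) ⊆ TT(r^{⌈k/2⌉}, 2^k) for the left-to-right leaf ordering.) -/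
section Auxiliary

open Module Submodule Matrix

/-! ### Linear algebra auxiliary lemmas -/

lemma aux_finrank_iSup_le_sum {𝕜 : Type*} [Field 𝕜] {W : Type*} [AddCommGroup W] [Module 𝕜 W]
    [FiniteDimensional 𝕜 W] {n : Type*} [Fintype n] (V : n → Submodule 𝕜 W) :
    finrank 𝕜 ↥(⨆ i, V i) ≤ ∑ i, finrank 𝕜 ↥(V i) := by
  classical
  have key : ∀ s : Finset n, finrank 𝕜 ↥(s.sup V) ≤ ∑ i ∈ s, finrank 𝕜 ↥(V i) := by
    intro s
    induction s using Finset.induction_on with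
    | empty => simp
    | insert a s ha ih =>
      rw [Finset.sup_insert, Finset.sum_insert ha]
      exact le_trans (Submodule.finrank_add_le_finrank_add_finrank _ _) (by gcongr)
  rw [← Finset.sup_univ_eq_iSup]
  simpa using key Finset.univ

variable {𝕜 : Type*} [Field 𝕜] {ι : Type*} [Fintype ι] [DecidableEq ι]

lemma aux_flatteningRank_union_le (d : ι → ℕ) (t : (∀ i, Fin (d i)) → 𝕜) {A B : Finset ι}
    (hAB : Disjoint A B) :
    flatteningRank d (A ∪ B) t ≤ flatteningRank d A t * flatteningRank d B t := by
  classical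
  set MA := flattening d A t with hMA
  set MB := flattening d B t with hMB
  set MU := flattening d (A ∪ B) t with hMU
  obtain ⟨b, hbsub, hbspan, hbind⟩ := exists_linearIndependent 𝕜 (Set.range MA)
  have hbfin : b.Finite := hbind.setFinite
  haveI := hbfin.fintype
  have hcard : Fintype.card b = MA.rank := by
    rw [MA.rank_eq_finrank_span_row]
    change _ = finrank 𝕜 ↥(span 𝕜 (Set.range MA))
    rw [← hbspan, finrank_span_set_eq_card hbind,
      Set.toFinset_card]
  choose x hx using fun v : b => hbsub v.2
  let gB : b → (∀ i : {i // i ∉ (A ∪ B)}, Fin (d i.1)) → (∀ i : {i // i ∉ B}, Fin (d i.1)) :=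
    fun v z i => if hA : i.1 ∈ A then x v ⟨i.1, hA⟩
      else z ⟨i.1, fun h => ((Finset.mem_union.mp h).elim hA i.2)⟩
  let N : b → Matrix (∀ i : {i // i ∈ B}, Fin (d i.1)) (∀ i : {i // i ∉ (A ∪ B)}, Fin (d i.1)) 𝕜 :=
    fun v => MB.submatrix id (gB v)
  have hNrank : ∀ v : b, (N v).rank ≤ MB.rank := by
    intro v
    rw [Matrix.rank_eq_finrank_span_cols, Matrix.rank_eq_finrank_span_cols]
    apply Submodule.finrank_mono
    apply Submodule.span_mono
    rintro _ ⟨z, rfl⟩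
    exact ⟨gB v z, rfl⟩
  have main : span 𝕜 (Set.range MU) ≤ ⨆ v : b, span 𝕜 (Set.range (N v)) := by
    rw [span_le]
    rintro _ ⟨u, rfl⟩
    let xA : (∀ i : {i // i ∈ A}, Fin (d i.1)) := fun i => u ⟨i.1, Finset.mem_union_left _ i.2⟩
    let yB : (∀ i : {i // i ∈ B}, Fin (d i.1)) := fun i => u ⟨i.1, Finset.mem_union_right _ i.2⟩
    let e : (∀ i : {i // i ∉ (A ∪ B)}, Fin (d i.1)) → (∀ i : {i // i ∉ A}, Fin (d i.1)) :=
      fun z i => if hB : i.1 ∈ B then yB ⟨i.1, hB⟩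
        else z ⟨i.1, fun h => ((Finset.mem_union.mp h).elim i.2 hB)⟩
    let Φ := LinearMap.funLeft 𝕜 𝕜 e
    have hMUu : MU u = Φ (MA xA) := by
      funext z
      show MU u z = MA xA (e z)
      simp only [hMU, hMA, flattening]
      congr 1
      funext i
      by_cases hA : i ∈ A
      · rw [dif_pos (Finset.mem_union_left _ hA), dif_pos hA]
      · by_cases hB : i ∈ B
        · rw [dif_pos (Finset.mem_union_right _ hB), dif_neg hA]
          simp only [e, dif_pos hB, yB]
        · rw [dif_neg (fun h => ((Finset.mem_union.mp h).elim hA hB)), dif_neg hA]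
          simp only [e, dif_neg hB]
    have key : ∀ v : b, Φ (MA (x v)) = (N v) (fun i => u ⟨i.1, Finset.mem_union_right _ i.2⟩) := by
      intro v
      funext z
      show MA (x v) (e z) = MB (fun i => u ⟨i.1, Finset.mem_union_right _ i.2⟩) (gB v z)
      simp only [hMA, hMB, flattening]
      congr 1
      funext i
      by_cases hA : i ∈ A
      · have hB : i ∉ B := Finset.disjoint_left.mp hAB hA
        rw [dif_pos hA, dif_neg hB]
        simp only [gB, dif_pos hA]
      · rw [dif_neg hA]
        by_cases hB : i ∈ B
        · rw [dif_pos hB]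
          simp only [e, dif_pos hB, yB]
        · rw [dif_neg hB]
          simp only [e, dif_neg hB, gB, dif_neg hA]
    have h1 : MA xA ∈ span 𝕜 b := hbspan ▸ subset_span (Set.mem_range_self xA)
    have h2 : MU u ∈ Submodule.map Φ (span 𝕜 b) := by
      rw [hMUu]; exact Submodule.mem_map_of_mem h1
    rw [Submodule.map_span] at h2
    refine span_le.mpr ?_ h2
    rintro _ ⟨w, hw, rfl⟩
    have hkey := key ⟨w, hw⟩
    rw [hx ⟨w, hw⟩] at hkey
    rw [hkey]
    exact le_iSup (fun v : b => span 𝕜 (Set.range (N v))) ⟨w, hw⟩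
      (subset_span (Set.mem_range_self _))
  calc MU.rank = finrank 𝕜 ↥(span 𝕜 (Set.range MU)) := MU.rank_eq_finrank_span_row
    _ ≤ finrank 𝕜 ↥(⨆ v : b, span 𝕜 (Set.range (N v))) := Submodule.finrank_mono main
    _ ≤ ∑ v : b, finrank 𝕜 ↥(span 𝕜 (Set.range (N v))) := aux_finrank_iSup_le_sum _
    _ ≤ ∑ _v : b, MB.rank := by
        apply Finset.sum_le_sum
        intro v _
        exact (le_of_eq (N v).rank_eq_finrank_span_row.symm).trans (hNrank v)
    _ = Fintype.card b * MB.rank := by rw [Finset.sum_const, smul_eq_mul, Finset.card_univ]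
    _ = MA.rank * MB.rank := by rw [hcard]

lemma aux_rank_submatrix_equiv {m n m' n' : Type*} [Fintype m] [Fintype n] [Fintype m']
    [Fintype n'] [DecidableEq n] [DecidableEq n']
    (A : Matrix m n 𝕜) (e₁ : m' ≃ m) (e₂ : n' ≃ n) :
    (A.submatrix e₁ e₂).rank = A.rank := by
  rw [Matrix.rank, Matrix.rank, Matrix.mulVecLin_submatrix, LinearMap.range_comp,
    LinearMap.range_comp,
    show LinearMap.funLeft 𝕜 𝕜 e₂.symm = (LinearEquiv.funCongrLeft 𝕜 𝕜 e₂.symm : _) from rfl,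
    LinearEquiv.range, Submodule.map_top,
    show LinearMap.funLeft 𝕜 𝕜 e₁ = (LinearEquiv.funCongrLeft 𝕜 𝕜 e₁ : _) from rfl]
  exact LinearEquiv.finrank_map_eq _ _

lemma aux_flatteningRank_compl (d : ι → ℕ) (t : (∀ i, Fin (d i)) → 𝕜) (S : Finset ι) :
    flatteningRank d Sᶜ t = flatteningRank d S t := by
  classical
  let eR : (∀ i : {i // i ∈ Sᶜ}, Fin (d i.1)) ≃ (∀ i : {i // i ∉ S}, Fin (d i.1)) :=
    { toFun := fun a i => a ⟨i.1, Finset.mem_compl.mpr i.2⟩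
      invFun := fun a i => a ⟨i.1, Finset.mem_compl.mp i.2⟩
      left_inv := fun a => rfl
      right_inv := fun a => rfl }
  let eC : (∀ i : {i // i ∉ Sᶜ}, Fin (d i.1)) ≃ (∀ i : {i // i ∈ S}, Fin (d i.1)) :=
    { toFun := fun a i => a ⟨i.1, fun hc => Finset.mem_compl.mp hc i.2⟩
      invFun := fun a i => a ⟨i.1, by_contra fun hc => i.2 (Finset.mem_compl.mpr hc)⟩
      left_inv := fun a => rfl
      right_inv := fun a => rfl }
  have hM : flattening d Sᶜ t = ((flattening d S t)ᵀ).submatrix eR eC := by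
    funext a c
    show _ = flattening d S t (eC c) (eR a)
    simp only [flattening]
    congr 1
    funext i
    by_cases h : i ∈ S
    · rw [dif_neg (by simpa using h), dif_pos h]
      rfl
    · rw [dif_pos (Finset.mem_compl.mpr h), dif_neg h]
      rfl
  rw [flatteningRank, flatteningRank, hM, aux_rank_submatrix_equiv, Matrix.rank_transpose]

lemma aux_flatteningRank_le_one_of_isEmpty_mem (d : ι → ℕ) (t : (∀ i, Fin (d i)) → 𝕜)
    (S : Finset ι) (h : IsEmpty {i // i ∈ S}) : flatteningRank d S t ≤ 1 := by
  haveI := h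
  calc flatteningRank d S t ≤ Fintype.card (∀ i : {i // i ∈ S}, Fin (d i.1)) :=
        Matrix.rank_le_card_height _
    _ = 1 := Fintype.card_unique

lemma aux_flatteningRank_le_one_of_isEmpty_notMem (d : ι → ℕ) (t : (∀ i, Fin (d i)) → 𝕜)
    (S : Finset ι) (h : IsEmpty {i // i ∉ S}) : flatteningRank d S t ≤ 1 := by
  haveI := h
  calc flatteningRank d S t ≤ Fintype.card (∀ i : {i // i ∉ S}, Fin (d i.1)) :=
        Matrix.rank_le_card_width _
    _ = 1 := Fintype.card_unique

lemma aux_flatteningRank_zero (d : ι → ℕ) (S : Finset ι) :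
    flatteningRank d S (0 : (∀ i, Fin (d i)) → 𝕜) = 0 := by
  have h : flattening d S (0 : (∀ i, Fin (d i)) → 𝕜) = 0 := by
    funext a c
    rfl
  rw [flatteningRank, h, Matrix.rank_zero]

lemma aux_eq_zero_of_full (d : ι → ℕ) (t : (∀ i, Fin (d i)) → 𝕜) (S : Finset ι)
    (hS : ∀ i, i ∈ S) (h : flatteningRank d S t = 0) : t = 0 := by
  classical
  have hcol : ∀ c, (flattening d S t)ᵀ c = 0 := by
    intro c
    have h0 : span 𝕜 (Set.range (flattening d S t)ᵀ) = ⊥ := by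
      rw [flatteningRank, Matrix.rank_eq_finrank_span_cols] at h
      exact Submodule.finrank_eq_zero.mp h
    have hmem : (flattening d S t)ᵀ c ∈ span 𝕜 (Set.range (flattening d S t)ᵀ) :=
      subset_span (Set.mem_range_self c)
    rw [h0] at hmem
    simpa using hmem
  funext v
  have hv : t v = flattening d S t (fun i => v i.1) (fun i => absurd (hS i.1) i.2) := by
    simp only [flattening]
    congr 1
    funext i
    rw [dif_pos (hS i)]
  rw [hv]
  have := congrFun (hcol (fun i => absurd (hS i.1) i.2)) (fun i => v i.1)
  simpa using this

lemma aux_flatteningRank_biUnion_le {α : Type*} [DecidableEq α] (d : ι → ℕ)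
    (t : (∀ i, Fin (d i)) → 𝕜) (r : ℕ) (F : Finset α) (P : α → Finset ι)
    (hdisj : ∀ a ∈ F, ∀ a' ∈ F, a ≠ a' → Disjoint (P a) (P a'))
    (hr : ∀ a ∈ F, flatteningRank d (P a) t ≤ r) :
    flatteningRank d (F.biUnion P) t ≤ r ^ F.card := by
  classical
  revert hdisj hr
  induction F using Finset.induction_on with
  | empty =>
    intro _ _
    simp only [Finset.biUnion_empty, Finset.card_empty, pow_zero]
    exact aux_flatteningRank_le_one_of_isEmpty_mem d t ∅ ⟨fun x => Finset.notMem_empty x.1 x.2⟩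
  | insert a F ha ih =>
    intro hdisj hr
    rw [Finset.biUnion_insert, Finset.card_insert_of_notMem ha]
    have hdis : Disjoint (P a) (F.biUnion P) := by
      rw [Finset.disjoint_biUnion_right]
      intro a' ha'
      exact hdisj a (Finset.mem_insert_self a F) a' (Finset.mem_insert_of_mem ha')
        (fun h => ha (h ▸ ha'))
    calc flatteningRank d (P a ∪ F.biUnion P) t
        ≤ flatteningRank d (P a) t * flatteningRank d (F.biUnion P) t :=
          aux_flatteningRank_union_le d t hdis
      _ ≤ r * r ^ F.card := Nat.mul_le_mul (hr a (Finset.mem_insert_self a F))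
          (ih (fun x hx y hy => hdisj x (Finset.mem_insert_of_mem hx) y
                (Finset.mem_insert_of_mem hy))
              (fun x hx => hr x (Finset.mem_insert_of_mem hx)))
      _ = r ^ (F.card + 1) := by ring

/-! ### Arithmetic auxiliary lemmas -/

lemma aux_div_pow_succ (a s : ℕ) : a / 2 ^ (s+1) = a / 2 ^ s / 2 := by
  rw [Nat.div_div_eq_div_mul, pow_succ]

lemma aux_div2_pow (a s : ℕ) : a / 2 / 2 ^ s = a / 2 ^ (s+1) := by
  rw [Nat.div_div_eq_div_mul, pow_succ']

lemma aux_div_pow_mono {a b s s' : ℕ} (h : s ≤ s') (hab : a / 2 ^ s = b / 2 ^ s) :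
    a / 2 ^ s' = b / 2 ^ s' := by
  have h2 : (2:ℕ) ^ s' = 2 ^ s * 2 ^ (s' - s) := by rw [← pow_add]; congr 1; omega
  rw [h2, ← Nat.div_div_eq_div_mul, ← Nat.div_div_eq_div_mul, hab]

lemma aux_exists_split {i j : ℕ} (h : i < j) :
    ∃ s, i / 2 ^ (s+1) = j / 2 ^ (s+1) ∧ i / 2 ^ s % 2 = 0 ∧ j / 2 ^ s % 2 = 1 := by
  induction j using Nat.strong_induction_on generalizing i with
  | _ j IH =>
    by_cases hd : i / 2 = j / 2
    · exact ⟨0, by simpa using hd, by simp; omega, by simp; omega⟩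
    · have h2 : i / 2 < j / 2 := lt_of_le_of_ne (Nat.div_le_div_right h.le) hd
      obtain ⟨s, h1, h2, h3⟩ := IH (j / 2) (Nat.div_lt_self (by omega) one_lt_two) h2
      rw [aux_div2_pow, aux_div2_pow] at h1
      rw [aux_div2_pow] at h2 h3
      exact ⟨s + 1, h1, h2, h3⟩

lemma aux_keyA {i j s : ℕ} (h1 : i / 2 ^ (s+1) = j / 2 ^ (s+1)) (h2 : i / 2 ^ s % 2 = 0) :
    i / 2 ^ s = 2 * (j / 2 ^ (s+1)) := by
  have e1 := aux_div_pow_succ i s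
  have e2 := aux_div_pow_succ j s
  generalize i / 2 ^ s = x at h2 e1 ⊢
  generalize j / 2 ^ s = y at e2
  generalize i / 2 ^ (s+1) = p at h1 e1
  generalize j / 2 ^ (s+1) = q at h1 e2 ⊢
  omega

lemma aux_keyB {i j s : ℕ} (h1 : j / 2 ^ (s+1) = i / 2 ^ (s+1)) (h2 : i / 2 ^ s % 2 = 1) :
    i / 2 ^ s = 2 * (j / 2 ^ (s+1)) + 1 := by
  have e1 := aux_div_pow_succ i s
  generalize i / 2 ^ s = x at h2 e1 ⊢
  generalize i / 2 ^ (s+1) = p at h1 e1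
  generalize j / 2 ^ (s+1) = q at h1 ⊢
  omega

lemma aux_ltA {i j s : ℕ} (hmem : i / 2 ^ s = 2 * (j / 2 ^ (s+1))) (hodd : j / 2 ^ s % 2 = 1) :
    i / 2 ^ s < j / 2 ^ s := by
  have e2 := aux_div_pow_succ j s
  generalize i / 2 ^ s = x at hmem ⊢
  generalize j / 2 ^ s = y at hodd e2 ⊢
  generalize j / 2 ^ (s+1) = q at hmem e2
  omega

lemma aux_gtB {i j s : ℕ} (hmem : i / 2 ^ s = 2 * (j / 2 ^ (s+1)) + 1)
    (heven : j / 2 ^ s % 2 = 0) : j / 2 ^ s < i / 2 ^ s := by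
  have e2 := aux_div_pow_succ j s
  generalize i / 2 ^ s = x at hmem ⊢
  generalize j / 2 ^ s = y at heven e2 ⊢
  generalize j / 2 ^ (s+1) = q at hmem e2
  omega

lemma aux_lt_of_div_lt {i j s : ℕ} (h : i / 2 ^ s < j / 2 ^ s) : i < j :=
  Nat.lt_of_not_le fun hc => Nat.not_le.mpr h (Nat.div_le_div_right hc)

lemma aux_pos_of_odd_div {j s : ℕ} (h : j / 2 ^ s % 2 = 1) : 2 ^ s ≤ j := by
  have h1 : 1 ≤ j / 2 ^ s := Nat.pos_of_ne_zero (fun h0 => by rw [h0] at h; simp at h)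
  calc 2 ^ s = 1 * 2 ^ s := (one_mul _).symm
    _ ≤ j / 2 ^ s * 2 ^ s := by gcongr
    _ ≤ j := Nat.div_mul_le_self _ _

lemma aux_dyad_nest {i j s s' c c' : ℕ} (hss : s < s')
    (h : i / 2 ^ s = 2 * (j / 2 ^ (s+1)) + c) (hc : c < 2)
    (h' : i / 2 ^ s' = 2 * (j / 2 ^ (s'+1)) + c') (hpar : j / 2 ^ s' % 2 ≠ c') :
    False := by
  have e1 : i / 2 ^ (s+1) = j / 2 ^ (s+1) := by
    have e := aux_div_pow_succ i s
    have e' := aux_div_pow_succ j s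
    generalize i / 2 ^ s = x at h e
    generalize j / 2 ^ s = y at e'
    generalize i / 2 ^ (s+1) = p at e ⊢
    generalize j / 2 ^ (s+1) = q at h e' ⊢
    omega
  have e2 : i / 2 ^ s' = j / 2 ^ s' := aux_div_pow_mono hss e1
  have e3 := aux_div_pow_succ j s'
  generalize i / 2 ^ s' = x at h' e2
  generalize j / 2 ^ s' = y at hpar e2 e3
  generalize j / 2 ^ (s'+1) = q at h' e3
  omega

/-! ### Dyadic intervals -/

def dyad (k m s : ℕ) : Finset (Fin (2^k)) :=
  Finset.univ.filter fun i : Fin (2 ^ k) => m * 2 ^ s ≤ (i : ℕ) ∧ (i : ℕ) < (m + 1) * 2 ^ s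

lemma mem_dyad {k m s : ℕ} {i : Fin (2^k)} : i ∈ dyad k m s ↔ (i:ℕ) / 2 ^ s = m := by
  have h2s : 0 < 2 ^ s := Nat.two_pow_pos s
  simp only [dyad, Finset.mem_filter, Finset.mem_univ, true_and]
  constructor
  · rintro ⟨h1, h2⟩
    have e1 : m ≤ (i:ℕ) / 2 ^ s := (Nat.le_div_iff_mul_le h2s).mpr h1
    have e2 : (i:ℕ) / 2 ^ s < m + 1 := (Nat.div_lt_iff_lt_mul h2s).mpr h2
    omega
  · rintro rfl
    exact ⟨Nat.div_mul_le_self _ _,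
      (Nat.div_lt_iff_lt_mul h2s).mp (Nat.lt_succ_self _)⟩

lemma aux_partA {k j : ℕ} (hj : j < 2 ^ k) :
    (Finset.univ.filter fun i : Fin (2 ^ k) => (i : ℕ) < j) =
      ((Finset.range k).filter fun s => j / 2 ^ s % 2 = 1).biUnion
        (fun s => dyad k (2 * (j / 2 ^ (s+1))) s) := by
  ext i
  simp only [Finset.mem_filter, Finset.mem_univ, true_and, Finset.mem_biUnion, mem_dyad,
    Finset.mem_range]
  constructor
  · intro h
    obtain ⟨s, h1, h2, h3⟩ := aux_exists_split h
    have hs : s < k :=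
      (Nat.pow_lt_pow_iff_right one_lt_two).mp (lt_of_le_of_lt (aux_pos_of_odd_div h3) hj)
    exact ⟨s, ⟨hs, h3⟩, aux_keyA h1 h2⟩
  · rintro ⟨s, ⟨-, hodd⟩, hmem⟩
    exact aux_lt_of_div_lt (aux_ltA hmem hodd)

lemma aux_partB {k j : ℕ} (hj : j < 2 ^ k) :
    (Finset.univ.filter fun i : Fin (2 ^ k) => ¬ (i : ℕ) < j) =
      dyad k j 0 ∪ ((Finset.range k).filter fun s => ¬ j / 2 ^ s % 2 = 1).biUnion
        (fun s => dyad k (2 * (j / 2 ^ (s+1)) + 1) s) := by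
  ext i
  simp only [Finset.mem_filter, Finset.mem_univ, true_and, Finset.mem_union, Finset.mem_biUnion,
    mem_dyad, Finset.mem_range, pow_zero, Nat.div_one]
  constructor
  · intro h
    rcases Nat.eq_or_lt_of_le (Nat.le_of_not_lt h) with heq | hlt
    · exact Or.inl heq.symm
    · obtain ⟨s, h1, h2, h3⟩ := aux_exists_split hlt
      have hs : s < k :=
        (Nat.pow_lt_pow_iff_right one_lt_two).mp
          (lt_of_le_of_lt (aux_pos_of_odd_div h3) i.isLt)
      exact Or.inr ⟨s, ⟨hs, by simp [h2]⟩, aux_keyB h1 h3⟩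
  · rintro (heq | ⟨s, ⟨-, heven'⟩, hmem⟩)
    · omega
    · have heven : j / 2 ^ s % 2 = 0 := by
        generalize j / 2 ^ s = y at heven' ⊢; omega
      exact fun hc => absurd (aux_lt_of_div_lt (aux_gtB hmem heven)) (by omega)

lemma aux_disjA {k j : ℕ} {s s' : ℕ} (hne : s ≠ s') (hodd : j / 2 ^ s % 2 = 1)
    (hodd' : j / 2 ^ s' % 2 = 1) :
    Disjoint (dyad k (2 * (j / 2 ^ (s+1))) s) (dyad k (2 * (j / 2 ^ (s'+1))) s') := by
  rw [Finset.disjoint_left]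
  intro i hi hi'
  rw [mem_dyad] at hi hi'
  rcases Nat.lt_or_ge s s' with h | h
  · exact aux_dyad_nest (i := (i:ℕ)) (j := j) (c := 0) (c' := 0) h (by simpa using hi)
      (by norm_num) (by simpa using hi') (by simp [hodd'])
  · exact aux_dyad_nest (i := (i:ℕ)) (j := j) (c := 0) (c' := 0) (show s' < s by omega)
      (by simpa using hi') (by norm_num) (by simpa using hi) (by simp [hodd])

lemma aux_disjB {k j : ℕ} {s s' : ℕ} (hne : s ≠ s') (heven : j / 2 ^ s % 2 = 0)
    (heven' : j / 2 ^ s' % 2 = 0) :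
    Disjoint (dyad k (2 * (j / 2 ^ (s+1)) + 1) s) (dyad k (2 * (j / 2 ^ (s'+1)) + 1) s') := by
  rw [Finset.disjoint_left]
  intro i hi hi'
  rw [mem_dyad] at hi hi'
  rcases Nat.lt_or_ge s s' with h | h
  · exact aux_dyad_nest (i := (i:ℕ)) (j := j) (c := 1) (c' := 1) h hi
      (by norm_num) hi' (by simp [heven'])
  · exact aux_dyad_nest (i := (i:ℕ)) (j := j) (c := 1) (c' := 1) (show s' < s by omega)
      hi' (by norm_num) hi (by simp [heven])

lemma aux_disjB0 {k j : ℕ} {s : ℕ} (heven : j / 2 ^ s % 2 = 0) :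
    Disjoint (dyad k j 0) (dyad k (2 * (j / 2 ^ (s+1)) + 1) s) := by
  rw [Finset.disjoint_left]
  intro i hi hi'
  rw [mem_dyad] at hi hi'
  simp only [pow_zero, Nat.div_one] at hi
  rw [hi] at hi'
  have e := aux_div_pow_succ j s
  generalize j / 2 ^ s = y at heven hi' e
  generalize j / 2 ^ (s+1) = q at hi' e
  omega

lemma aux_boundA {j s k : ℕ} (hodd : j / 2 ^ s % 2 = 1) (hj : j ≤ 2 ^ k) :
    (2 * (j / 2 ^ (s+1)) + 1) * 2 ^ s ≤ 2 ^ k := by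
  have e := aux_div_pow_succ j s
  have h1 : 2 * (j / 2 ^ (s+1)) + 1 = j / 2 ^ s := by
    generalize j / 2 ^ s = y at hodd e ⊢
    generalize j / 2 ^ (s+1) = q at e ⊢
    omega
  rw [h1]
  exact le_trans (Nat.div_mul_le_self _ _) hj

lemma aux_boundB {j s k : ℕ} (hs : s < k) (hj : j < 2 ^ k) :
    (2 * (j / 2 ^ (s+1)) + 1 + 1) * 2 ^ s ≤ 2 ^ k := by
  have h1 : (2 * (j / 2 ^ (s+1)) + 1 + 1) * 2 ^ s = (j / 2 ^ (s+1) + 1) * 2 ^ (s+1) := by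
    rw [pow_succ]
    ring
  have h2 : j / 2 ^ (s+1) < 2 ^ (k-s-1) := by
    apply (Nat.div_lt_iff_lt_mul (Nat.two_pow_pos _)).mpr
    calc j < 2 ^ k := hj
      _ = 2 ^ (k-s-1) * 2 ^ (s+1) := by rw [← pow_add]; congr 1; omega
  calc (2 * (j / 2 ^ (s+1)) + 1 + 1) * 2 ^ s = (j / 2 ^ (s+1) + 1) * 2 ^ (s+1) := h1
    _ ≤ 2 ^ (k-s-1) * 2 ^ (s+1) := by gcongr; omega
    _ = 2 ^ k := by rw [← pow_add]; congr 1; omega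

end Auxiliary

/-- HF(r, k) ⊆ TT(r^⌈k/2⌉, 2^k) for the left-to-right leaf ordering: if all flattening
ranks of `t` with respect to dyadic intervals are at most `r`, then all flattening ranks of
`t` with respect to initial segments are at most `r^⌈k/2⌉`.  (Leaves are indexed by
`Fin (2^k)`, zero-based.) -/
theorem stmt_14 {𝕜 : Type*} [Field 𝕜] (k : ℕ) (d : Fin (2 ^ k) → ℕ) (r : ℕ)
    (t : (∀ i, Fin (d i)) → 𝕜)
    (ht : ∀ m s : ℕ, (m + 1) * 2 ^ s ≤ 2 ^ k →
      flatteningRank d (Finset.univ.filter fun i : Fin (2 ^ k) =>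
        m * 2 ^ s ≤ (i : ℕ) ∧ (i : ℕ) < (m + 1) * 2 ^ s) t ≤ r) :
    ∀ j ≤ 2 ^ k,
      flatteningRank d (Finset.univ.filter fun i : Fin (2 ^ k) => (i : ℕ) < j) t
        ≤ r ^ ((k + 1) / 2) := by
  classical
  intro j hj
  rcases Nat.eq_zero_or_pos r with rfl | hrpos
  · -- degenerate case `r = 0`: the tensor must vanish
    have h0 := ht 0 k (by norm_num)
    have ht0 : t = 0 := by
      apply aux_eq_zero_of_full d t _ _ (Nat.le_zero.mp h0)
      intro i
      simp only [Finset.mem_filter, Finset.mem_univ, true_and]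
      exact ⟨by simp, by simpa using i.isLt⟩
    rw [ht0, aux_flatteningRank_zero]
    exact Nat.zero_le _
  rcases eq_or_lt_of_le hj with rfl | hjlt
  · -- case `j = 2 ^ k`: the complement is empty
    refine le_trans (aux_flatteningRank_le_one_of_isEmpty_notMem d t _ ?_)
      (Nat.one_le_pow _ _ hrpos)
    constructor
    intro x
    apply x.2
    simp only [Finset.mem_filter, Finset.mem_univ, true_and]
    exact x.1.isLt
  · -- main case `j < 2 ^ k`
    set ones := (Finset.range k).filter (fun s => j / 2 ^ s % 2 = 1) with hones
    set zeros := (Finset.range k).filter (fun s => ¬ j / 2 ^ s % 2 = 1) with hzeros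
    have hcards : ones.card + zeros.card = k := by
      rw [hones, hzeros, Finset.card_filter_add_card_filter_not, Finset.card_range]
    have honesk : ones.card ≤ k := by omega
    by_cases hcase : ones.card ≤ (k + 1) / 2
    · rw [aux_partA hjlt]
      calc flatteningRank d (ones.biUnion fun s => dyad k (2 * (j / 2 ^ (s+1))) s) t
          ≤ r ^ ones.card := by
            apply aux_flatteningRank_biUnion_le
            · intro a ha a' ha' hne
              exact aux_disjA hne (Finset.mem_filter.mp ha).2 (Finset.mem_filter.mp ha').2
            · intro s hs
              exact ht _ s (aux_boundA (Finset.mem_filter.mp hs).2 hjlt.le)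
        _ ≤ r ^ ((k + 1) / 2) := Nat.pow_le_pow_right hrpos hcase
    · have hzc : zeros.card + 1 ≤ (k + 1) / 2 := by omega
      have heven : ∀ s ∈ zeros, j / 2 ^ s % 2 = 0 := by
        intro s hs
        have h1 := (Finset.mem_filter.mp hs).2
        generalize j / 2 ^ s = y at h1 ⊢
        omega
      calc flatteningRank d (Finset.univ.filter fun i : Fin (2 ^ k) => (i : ℕ) < j) t
          = flatteningRank d (Finset.univ.filter fun i : Fin (2 ^ k) => (i : ℕ) < j)ᶜ t :=
            (aux_flatteningRank_compl d t _).symm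
        _ = flatteningRank d
              (dyad k j 0 ∪ zeros.biUnion fun s => dyad k (2 * (j / 2 ^ (s+1)) + 1) s) t := by
            rw [Finset.compl_filter, aux_partB hjlt]
        _ ≤ flatteningRank d (dyad k j 0) t *
              flatteningRank d (zeros.biUnion fun s => dyad k (2 * (j / 2 ^ (s+1)) + 1) s) t := by
            apply aux_flatteningRank_union_le
            rw [Finset.disjoint_biUnion_right]
            intro s hs
            exact aux_disjB0 (heven s hs)
        _ ≤ r * r ^ zeros.card := by
            apply Nat.mul_le_mul
            · exact ht j 0 (by simpa using hjlt)
            · apply aux_flatteningRank_biUnion_le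
              · intro a ha a' ha' hne
                exact aux_disjB hne (heven a ha) (heven a' ha')
              · intro s hs
                exact ht _ s (aux_boundB (Finset.mem_range.mp (Finset.mem_of_mem_filter s hs))
                  hjlt)
        _ = r ^ (zeros.card + 1) := by ring
        _ ≤ r ^ ((k + 1) / 2) := Nat.pow_le_pow_right hrpos hzc
end

section
/- Let V₁, …, Vₙ be finite-dimensional vector spaces, σ a permutation of {1, …, n}, and r ≥ 2, with n = 2^k, k ≥ 3, and dim V_i ≥ r for all i. Suppose 2i−1 and 2i form a cherry of the perfect binary tree (for some 1 ≤ i ≤ 2^{k−1}) such that the positions σ^{-1}(2i−1) and σ^{-1}(2i) are both strictly between 1 and n. Then there exists a tensor t ∈ V₁ ⊗ ⋯ ⊗ Vₙ such that the flattening rank of t with respect to every σ-initial segment {σ(1), …, σ(j)} is at most r, while the flattening rank of t with respect to {2i−1, 2i} equals r². (Hence TT(r, 2^k) is not contained in HF(r² − 1, k) for any ordering of the leaves.) -/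
section Aux

variable {𝕜 : Type*} [Field 𝕜]

/-- rank-r identity link: indicator that `x = y < r`. -/
def qmat (r : ℕ) {m m' : ℕ} (x : Fin m) (y : Fin m') : 𝕜 :=
  if (x : ℕ) = (y : ℕ) ∧ (x : ℕ) < r then 1 else 0

def clipf (r : ℕ) (hr : 0 < r) {m : ℕ} (x : Fin m) : Fin r :=
  ⟨(x : ℕ) % r, Nat.mod_lt _ hr⟩

lemma qmat_eq (r : ℕ) (hr : 0 < r) {m m'} (x : Fin m) (y : Fin m') :
    (qmat r x y : 𝕜) =
      (if (x : ℕ) < r then 1 else 0) * (if (y : ℕ) < r then 1 else 0) *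
        (if clipf r hr x = clipf r hr y then 1 else 0) := by
  unfold qmat clipf
  by_cases hx : (x : ℕ) < r
  · by_cases hy : (y : ℕ) < r
    · simp only [hx, hy, if_true, Fin.mk.injEq, Nat.mod_eq_of_lt hx, Nat.mod_eq_of_lt hy,
        one_mul]
      by_cases hxy : (x : ℕ) = (y : ℕ) <;> simp [hxy, hx]
    · have h : ¬((x : ℕ) = (y : ℕ) ∧ (x : ℕ) < r) := by omega
      simp [h, hy]
  · have h : ¬((x : ℕ) = (y : ℕ) ∧ (x : ℕ) < r) := by omega
    simp [h, hx]

/-- the merge of row and column coordinates. -/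
def mrg {ι : Type*} [DecidableEq ι] {d : ι → ℕ} (S : Finset ι)
    (a : ∀ i : {i // i ∈ S}, Fin (d i.1)) (b : ∀ i : {i // i ∉ S}, Fin (d i.1)) :
    ∀ l, Fin (d l) := fun l => if h : l ∈ S then a ⟨l, h⟩ else b ⟨l, h⟩

lemma rank_le_of_split {α β γ : Type*} [Fintype α] [Fintype β] [Fintype γ]
    [DecidableEq α] [DecidableEq β] [DecidableEq γ]
    (M : Matrix α β 𝕜) (f : α → 𝕜) (g : β → 𝕜) (χ : α → γ) (ψ : β → γ)
    (h : ∀ a b, M a b = f a * g b * (if χ a = ψ b then 1 else 0)) :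
    M.rank ≤ Fintype.card γ := by
  have hM : M = (Matrix.of fun a c => f a * (if χ a = c then 1 else 0)) *
      (Matrix.of fun c b => g b * (if ψ b = c then 1 else 0)) := by
    ext a b
    rw [Matrix.mul_apply, h]
    rw [Finset.sum_eq_single (χ a)]
    · by_cases hc : χ a = ψ b <;> simp [hc, eq_comm]
    · intro c _ hc
      simp [Ne.symm hc]
    · simp
  calc M.rank = _ := by rw [hM]
    _ ≤ (Matrix.of fun a c => f a * (if χ a = c then 1 else 0)).rank :=
        Matrix.rank_mul_le_left _ _
    _ ≤ Fintype.card γ := Matrix.rank_le_card_width _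

end Aux
section Aux2

variable {𝕜 : Type*} [Field 𝕜]

lemma split_q {ι : Type*} [DecidableEq ι] {d : ι → ℕ} (r : ℕ) (hr : 0 < r) (S : Finset ι)
    (w₁ w₂ : ι) :
    ∃ (f : (∀ i : {i // i ∈ S}, Fin (d i.1)) → 𝕜)
      (g : (∀ i : {i // i ∉ S}, Fin (d i.1)) → 𝕜)
      (χ : (∀ i : {i // i ∈ S}, Fin (d i.1)) → Fin r)
      (ψ : (∀ i : {i // i ∉ S}, Fin (d i.1)) → Fin r),
      (∀ a b, (qmat r ((mrg S a b) w₁) ((mrg S a b) w₂) : 𝕜)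
          = f a * g b * (if χ a = ψ b then 1 else 0)) ∧
      ((w₁ ∈ S ↔ w₂ ∈ S) → ∀ a b, χ a = ψ b) := by
  by_cases h₁ : w₁ ∈ S <;> by_cases h₂ : w₂ ∈ S
  · exact ⟨fun a => qmat r (a ⟨w₁, h₁⟩) (a ⟨w₂, h₂⟩), fun _ => 1,
      fun _ => ⟨0, hr⟩, fun _ => ⟨0, hr⟩,
      fun a b => by simp [mrg, h₁, h₂], fun _ _ _ => rfl⟩
  · refine ⟨fun a => if ((a ⟨w₁, h₁⟩ : ℕ) < r) then 1 else 0,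
      fun b => if ((b ⟨w₂, h₂⟩ : ℕ) < r) then 1 else 0,
      fun a => clipf r hr (a ⟨w₁, h₁⟩), fun b => clipf r hr (b ⟨w₂, h₂⟩),
      fun a b => ?_, fun h => absurd (h.1 h₁) h₂⟩
    rw [show mrg S a b w₁ = a ⟨w₁, h₁⟩ from dif_pos h₁,
      show mrg S a b w₂ = b ⟨w₂, h₂⟩ from dif_neg h₂, qmat_eq r hr]
  · refine ⟨fun a => if ((a ⟨w₂, h₂⟩ : ℕ) < r) then 1 else 0,
      fun b => if ((b ⟨w₁, h₁⟩ : ℕ) < r) then 1 else 0,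
      fun a => clipf r hr (a ⟨w₂, h₂⟩), fun b => clipf r hr (b ⟨w₁, h₁⟩),
      fun a b => ?_, fun h => absurd (h.2 h₂) h₁⟩
    rw [show mrg S a b w₁ = b ⟨w₁, h₁⟩ from dif_neg h₁,
      show mrg S a b w₂ = a ⟨w₂, h₂⟩ from dif_pos h₂, qmat_eq r hr]
    have h1 : (if clipf r hr (b ⟨w₁, h₁⟩) = clipf r hr (a ⟨w₂, h₂⟩) then (1:𝕜) else 0)
        = (if clipf r hr (a ⟨w₂, h₂⟩) = clipf r hr (b ⟨w₁, h₁⟩) then (1:𝕜) else 0) := by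
      by_cases hc : clipf r hr (a ⟨w₂, h₂⟩) = clipf r hr (b ⟨w₁, h₁⟩)
      · rw [if_pos hc, if_pos hc.symm]
      · rw [if_neg hc, if_neg (fun hh => hc hh.symm)]
    rw [h1]; ring
  · exact ⟨fun _ => 1, fun b => qmat r (b ⟨w₁, h₁⟩) (b ⟨w₂, h₂⟩),
      fun _ => ⟨0, hr⟩, fun _ => ⟨0, hr⟩,
      fun a b => by simp [mrg, h₁, h₂], fun _ _ _ => rfl⟩

/-- The tensor: two rank-`r` links `(w₁,w₂)` and `(w₃,w₄)`, all coordinates outside `W`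
pinned to zero. -/
def TT {ι : Type*} [DecidableEq ι] [Fintype ι] (d : ι → ℕ) (r : ℕ) (W : Finset ι)
    (w₁ w₂ w₃ w₄ : ι) (x : ∀ l, Fin (d l)) : 𝕜 :=
  qmat r (x w₁) (x w₂) * qmat r (x w₃) (x w₄) *
    ∏ l, (if l ∈ W then (1 : 𝕜) else if (x l : ℕ) = 0 then 1 else 0)

lemma TT_swap {ι : Type*} [DecidableEq ι] [Fintype ι] (d : ι → ℕ) (r : ℕ) (W : Finset ι)
    (w₁ w₂ w₃ w₄ : ι) :
    TT (𝕜 := 𝕜) d r W w₁ w₂ w₃ w₄ = TT (𝕜 := 𝕜) d r W w₃ w₄ w₁ w₂ := by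
  funext x; unfold TT; ring

lemma split_Z {ι : Type*} [Fintype ι] [DecidableEq ι] {d : ι → ℕ} (S W : Finset ι)
    (a : ∀ i : {i // i ∈ S}, Fin (d i.1)) (b : ∀ i : {i // i ∉ S}, Fin (d i.1)) :
    (∏ l, (if l ∈ W then (1 : 𝕜) else if ((mrg S a b l : ℕ)) = 0 then 1 else 0))
      = (∏ l : {i // i ∈ S}, (if l.1 ∈ W then (1 : 𝕜) else if ((a l : ℕ)) = 0 then 1 else 0))
      * (∏ l : {i // i ∉ S}, (if l.1 ∈ W then (1 : 𝕜) else if ((b l : ℕ)) = 0 then 1 else 0)) := by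
  rw [← Fintype.prod_subtype_mul_prod_subtype (· ∈ S)
    (fun l => (if l ∈ W then (1 : 𝕜) else if ((mrg S a b l : ℕ)) = 0 then 1 else 0))]
  congr 1
  · refine Finset.prod_congr (by congr!) fun l _ => ?_
    rw [show mrg S a b l.1 = a ⟨l.1, l.2⟩ from dif_pos l.2]
  · refine Finset.prod_congr (by congr!) fun l _ => ?_
    rw [show mrg S a b l.1 = b ⟨l.1, l.2⟩ from dif_neg l.2]

end Aux2
section Aux3

variable {𝕜 : Type*} [Field 𝕜]

lemma flattening_apply {ι : Type*} [Fintype ι] [DecidableEq ι]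
    (d : ι → ℕ) (S : Finset ι) (t : (∀ i, Fin (d i)) → 𝕜) (a) (b) :
    flattening d S t a b = t (mrg S a b) := rfl

lemma key_rank_le {ι : Type*} [Fintype ι] [DecidableEq ι] (d : ι → ℕ) (r : ℕ) (hr : 0 < r)
    (W : Finset ι) (w₁ w₂ w₃ w₄ : ι) (S : Finset ι) (h : w₁ ∈ S ↔ w₂ ∈ S) :
    flatteningRank d S (TT (𝕜 := 𝕜) d r W w₁ w₂ w₃ w₄) ≤ r := by
  obtain ⟨f₁, g₁, χ₁, ψ₁, H₁, H₁'⟩ := split_q (𝕜 := 𝕜) (d := d) r hr S w₁ w₂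
  obtain ⟨f₂, g₂, χ₂, ψ₂, H₂, -⟩ := split_q (𝕜 := 𝕜) (d := d) r hr S w₃ w₄
  have hb := rank_le_of_split (flattening d S (TT (𝕜 := 𝕜) d r W w₁ w₂ w₃ w₄))
    (fun a => f₁ a * f₂ a *
      ∏ l : {i // i ∈ S}, (if l.1 ∈ W then (1 : 𝕜) else if ((a l : ℕ)) = 0 then 1 else 0))
    (fun b => g₁ b * g₂ b *
      ∏ l : {i // i ∉ S}, (if l.1 ∈ W then (1 : 𝕜) else if ((b l : ℕ)) = 0 then 1 else 0))
    χ₂ ψ₂ ?_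
  · simpa [flatteningRank] using hb
  · intro a b
    rw [flattening_apply]
    unfold TT
    rw [H₁ a b, H₂ a b, split_Z, if_pos (H₁' h a b)]
    ring

lemma key_rank_le2 {ι : Type*} [Fintype ι] [DecidableEq ι] (d : ι → ℕ) (r : ℕ) (hr : 0 < r)
    (W : Finset ι) (w₁ w₂ w₃ w₄ : ι) (S : Finset ι) :
    flatteningRank d S (TT (𝕜 := 𝕜) d r W w₁ w₂ w₃ w₄) ≤ r * r := by
  obtain ⟨f₁, g₁, χ₁, ψ₁, H₁, -⟩ := split_q (𝕜 := 𝕜) (d := d) r hr S w₁ w₂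
  obtain ⟨f₂, g₂, χ₂, ψ₂, H₂, -⟩ := split_q (𝕜 := 𝕜) (d := d) r hr S w₃ w₄
  have hb := rank_le_of_split (flattening d S (TT (𝕜 := 𝕜) d r W w₁ w₂ w₃ w₄))
    (fun a => f₁ a * f₂ a *
      ∏ l : {i // i ∈ S}, (if l.1 ∈ W then (1 : 𝕜) else if ((a l : ℕ)) = 0 then 1 else 0))
    (fun b => g₁ b * g₂ b *
      ∏ l : {i // i ∉ S}, (if l.1 ∈ W then (1 : 𝕜) else if ((b l : ℕ)) = 0 then 1 else 0))
    (fun a => (χ₁ a, χ₂ a)) (fun b => (ψ₁ b, ψ₂ b)) ?_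
  · simpa [flatteningRank] using hb
  · intro a b
    rw [flattening_apply]
    unfold TT
    rw [H₁ a b, H₂ a b, split_Z]
    have : (if (χ₁ a, χ₂ a) = (ψ₁ b, ψ₂ b) then (1 : 𝕜) else 0)
        = (if χ₁ a = ψ₁ b then (1 : 𝕜) else 0) * (if χ₂ a = ψ₂ b then (1 : 𝕜) else 0) := by
      by_cases e₁ : χ₁ a = ψ₁ b <;> by_cases e₂ : χ₂ a = ψ₂ b <;>
        simp [Prod.ext_iff, e₁, e₂]
    rw [this]
    ring

end Aux3
section Aux4

variable {𝕜 : Type*} [Field 𝕜]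

lemma key_rank_ge {ι : Type*} [Fintype ι] [DecidableEq ι] (d : ι → ℕ) (r : ℕ) (hr : 0 < r)
    (hd : ∀ l, r ≤ d l) (w₁ w₂ w₃ w₄ : ι)
    (h13 : w₁ ≠ w₃) (h24 : w₂ ≠ w₄)
    (h21 : w₂ ≠ w₁) (h23 : w₂ ≠ w₃) (h41 : w₄ ≠ w₁) (h43 : w₄ ≠ w₃) :
    r * r ≤ flatteningRank d {w₁, w₃} (TT (𝕜 := 𝕜) d r {w₁, w₂, w₃, w₄} w₁ w₂ w₃ w₄) := by
  classical
  set S : Finset ι := {w₁, w₃} with hS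
  set W : Finset ι := {w₁, w₂, w₃, w₄} with hW
  set M := flattening d S (TT (𝕜 := 𝕜) d r W w₁ w₂ w₃ w₄) with hM
  have hw1S : w₁ ∈ S := by simp [hS]
  have hw3S : w₃ ∈ S := by simp [hS]
  have hw2S : w₂ ∉ S := by simp [hS, h21, h23]
  have hw4S : w₄ ∉ S := by simp [hS, h41, h43]
  -- rows and columns realizing an identity submatrix
  set R : Fin r × Fin r → (∀ i : {i // i ∈ S}, Fin (d i.1)) := fun s l =>
    if l.1 = w₁ then ⟨s.1, lt_of_lt_of_le s.1.2 (hd l.1)⟩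
    else ⟨s.2, lt_of_lt_of_le s.2.2 (hd l.1)⟩ with hR
  set C : Fin r × Fin r → (∀ i : {i // i ∉ S}, Fin (d i.1)) := fun s l =>
    if l.1 = w₂ then ⟨s.1, lt_of_lt_of_le s.1.2 (hd l.1)⟩
    else if l.1 = w₄ then ⟨s.2, lt_of_lt_of_le s.2.2 (hd l.1)⟩
    else ⟨0, lt_of_lt_of_le hr (hd l.1)⟩ with hC
  have hMRC : ∀ s t, M (R s) (C t) = if s = t then (1 : 𝕜) else 0 := by
    intro s t
    rw [hM, flattening_apply]
    have e₁ : mrg S (R s) (C t) w₁ = ⟨s.1, lt_of_lt_of_le s.1.2 (hd w₁)⟩ := by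
      rw [show mrg S (R s) (C t) w₁ = R s ⟨w₁, hw1S⟩ from dif_pos hw1S, hR]
      simp
    have e₃ : mrg S (R s) (C t) w₃ = ⟨s.2, lt_of_lt_of_le s.2.2 (hd w₃)⟩ := by
      rw [show mrg S (R s) (C t) w₃ = R s ⟨w₃, hw3S⟩ from dif_pos hw3S, hR]
      simp [Ne.symm h13]
    have e₂ : mrg S (R s) (C t) w₂ = ⟨t.1, lt_of_lt_of_le t.1.2 (hd w₂)⟩ := by
      rw [show mrg S (R s) (C t) w₂ = C t ⟨w₂, hw2S⟩ from dif_neg hw2S, hC]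
      simp
    have e₄ : mrg S (R s) (C t) w₄ = ⟨t.2, lt_of_lt_of_le t.2.2 (hd w₄)⟩ := by
      rw [show mrg S (R s) (C t) w₄ = C t ⟨w₄, hw4S⟩ from dif_neg hw4S, hC]
      simp [Ne.symm h24]
    unfold TT
    have hprod : (∏ l, (if l ∈ W then (1 : 𝕜)
        else if ((mrg S (R s) (C t) l : ℕ)) = 0 then 1 else 0)) = 1 := by
      refine Finset.prod_eq_one fun l _ => ?_
      by_cases hl : l ∈ W
      · rw [if_pos hl]
      · rw [if_neg hl]
        have hl1 : l ≠ w₁ := by rintro rfl; simp [hW] at hl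
        have hl2 : l ≠ w₂ := by rintro rfl; simp [hW] at hl
        have hl3 : l ≠ w₃ := by rintro rfl; simp [hW] at hl
        have hl4 : l ≠ w₄ := by rintro rfl; simp [hW] at hl
        have hlS : l ∉ S := by simp [hS, hl1, hl3]
        rw [show mrg S (R s) (C t) l = C t ⟨l, hlS⟩ from dif_neg hlS, hC]
        simp [hl2, hl4]
    rw [hprod, mul_one]
    have hq : ∀ {m m' : ℕ} (x : Fin m) (x' : Fin m') (u v : Fin r)
        (hx : (x : ℕ) = u) (hx' : (x' : ℕ) = v),
        (qmat r x x' : 𝕜) = if u = v then 1 else 0 := by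
      intro m m' x x' u v hx hx'
      unfold qmat
      rw [hx, hx']
      by_cases huv : u = v
      · simp [huv, v.2]
      · rw [if_neg (by rintro ⟨hh, -⟩; exact huv (Fin.ext hh)), if_neg huv]
    rw [hq (mrg S (R s) (C t) w₁) (mrg S (R s) (C t) w₂) s.1 t.1 (by rw [e₁]) (by rw [e₂]),
        hq (mrg S (R s) (C t) w₃) (mrg S (R s) (C t) w₄) s.2 t.2 (by rw [e₃]) (by rw [e₄])]
    by_cases e1 : s.1 = t.1 <;> by_cases e2 : s.2 = t.2 <;>
      simp [Prod.ext_iff, e1, e2]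
  -- now extract the rank bound
  set P : Matrix (Fin r × Fin r) _ 𝕜 := fun s a => if a = R s then 1 else 0 with hP
  set Q : Matrix _ (Fin r × Fin r) 𝕜 := fun b t => if b = C t then 1 else 0 with hQ
  have hid : P * M * Q = 1 := by
    ext s t
    rw [Matrix.mul_apply]
    have hPM : ∀ b, (P * M) s b = M (R s) b := by
      intro b
      rw [Matrix.mul_apply]
      rw [Finset.sum_eq_single (R s)]
      · simp [hP]
      · intro a _ ha; simp [hP, ha]
      · simp
    calc (∑ b, (P * M) s b * Q b t) = ∑ b, (if b = C t then M (R s) b else 0) := by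
          refine Finset.sum_congr rfl fun b _ => ?_
          rw [hPM b, hQ]
          by_cases hb : b = C t <;> simp [hb]
      _ = M (R s) (C t) := by rw [Finset.sum_ite_eq' Finset.univ (C t) (fun b => M (R s) b)]; simp
      _ = (1 : Matrix (Fin r × Fin r) (Fin r × Fin r) 𝕜) s t := by
          rw [hMRC, Matrix.one_apply]
  have : ((1 : Matrix (Fin r × Fin r) (Fin r × Fin r) 𝕜)).rank ≤ M.rank := by
    rw [← hid]
    exact le_trans (Matrix.rank_mul_le_left _ _) (Matrix.rank_mul_le_right _ _)
  simpa [Matrix.rank_one, flatteningRank, hM] using this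

end Aux4

/-- TT(r, 2^k) ⊄ HF(r² − 1, k) for any matching of the leaves.  Leaves are indexed by
`Fin (2^k)`, zero-based; the cherry `{2i−1, 2i}` (1-based) becomes `{2i, 2i+1}` (0-based),
and the σ-initial segments are `{σ(0), …, σ(j−1)}`. -/
theorem stmt_16 {𝕜 : Type*} [Field 𝕜] (k r : ℕ) (hk : 3 ≤ k) (hr : 2 ≤ r)
    (d : Fin (2 ^ k) → ℕ) (hd : ∀ i, r ≤ d i)
    (σ : Equiv.Perm (Fin (2 ^ k)))
    (i : ℕ) (hi : 2 * i + 1 < 2 ^ k)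
    (c₁ : Fin (2 ^ k)) (hc₁ : (c₁ : ℕ) = 2 * i)
    (c₂ : Fin (2 ^ k)) (hc₂ : (c₂ : ℕ) = 2 * i + 1)
    (hpos₁ : 0 < (σ.symm c₁ : ℕ) ∧ (σ.symm c₁ : ℕ) < 2 ^ k - 1)
    (hpos₂ : 0 < (σ.symm c₂ : ℕ) ∧ (σ.symm c₂ : ℕ) < 2 ^ k - 1) :
    ∃ t : (∀ l, Fin (d l)) → 𝕜,
      (∀ j : ℕ,
        flatteningRank d (Finset.univ.filter fun l : Fin (2 ^ k) =>
          ((σ.symm l : ℕ) < j)) t ≤ r) ∧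
      flatteningRank d {c₁, c₂} t = r ^ 2 := by
  have hr0 : 0 < r := by omega
  have hc12 : c₁ ≠ c₂ := by
    intro h; rw [h] at hc₁; omega
  set A : ℕ := (σ.symm c₁ : ℕ) with hA
  set B : ℕ := (σ.symm c₂ : ℕ) with hB
  have hABne : A ≠ B := by
    intro h
    exact hc12 (by simpa using congrArg σ (Fin.ext h : σ.symm c₁ = σ.symm c₂))
  obtain ⟨a', b', haN, hbN, h₁, h₂, h₃, h₄, h₅, hcut⟩ :
      ∃ a' b', a' < 2 ^ k ∧ b' < 2 ^ k ∧ a' ≠ A ∧ a' ≠ B ∧ b' ≠ B ∧ b' ≠ A ∧ a' ≠ b' ∧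
        ∀ j : ℕ, (A < j ↔ a' < j) ∨ (B < j ↔ b' < j) := by
    have hAN : A < 2 ^ k := (σ.symm c₁).2
    have hBN : B < 2 ^ k := (σ.symm c₂).2
    refine ⟨if A + 1 = B then A - 1 else A + 1, if B + 1 = A then B - 1 else B + 1,
      ?_, ?_, ?_, ?_, ?_, ?_, ?_, fun j => ?_⟩ <;>
      obtain ⟨hA1, hA2⟩ := hpos₁ <;> obtain ⟨hB1, hB2⟩ := hpos₂ <;>
      split_ifs <;> omega
  set u : Fin (2 ^ k) := σ ⟨a', haN⟩ with hu
  set v : Fin (2 ^ k) := σ ⟨b', hbN⟩ with hv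
  have hsymm_u : (σ.symm u : ℕ) = a' := by rw [hu]; simp
  have hsymm_v : (σ.symm v : ℕ) = b' := by rw [hv]; simp
  have huc₁ : u ≠ c₁ := by
    intro h
    apply h₁
    have : σ.symm u = σ.symm c₁ := by rw [h]
    rw [← hsymm_u, this]
  have huc₂ : u ≠ c₂ := by
    intro h
    apply h₂
    have : σ.symm u = σ.symm c₂ := by rw [h]
    rw [← hsymm_u, this]
  have hvc₂ : v ≠ c₂ := by
    intro h
    apply h₃
    have : σ.symm v = σ.symm c₂ := by rw [h]
    rw [← hsymm_v, this]
  have hvc₁ : v ≠ c₁ := by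
    intro h
    apply h₄
    have : σ.symm v = σ.symm c₁ := by rw [h]
    rw [← hsymm_v, this]
  have huv : u ≠ v := by
    intro h
    apply h₅
    have : σ.symm u = σ.symm v := by rw [h]
    rw [← hsymm_u, ← hsymm_v, this]
  set W : Finset (Fin (2 ^ k)) := {c₁, u, c₂, v} with hW
  refine ⟨TT d r W c₁ u c₂ v, fun j => ?_, ?_⟩
  · -- prefix bound
    set S := Finset.univ.filter fun l : Fin (2 ^ k) => ((σ.symm l : ℕ) < j) with hSdef
    have hmem : ∀ l : Fin (2 ^ k), l ∈ S ↔ (σ.symm l : ℕ) < j := by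
      intro l; simp [hSdef]
    rcases hcut j with hc | hc
    · exact key_rank_le d r hr0 W c₁ u c₂ v S
        (by rw [hmem, hmem, hsymm_u, ← hA]; exact hc)
    · rw [TT_swap]
      exact key_rank_le d r hr0 W c₂ v c₁ u S
        (by rw [hmem, hmem, hsymm_v, ← hB]; exact hc)
  · -- cherry rank
    have hWeq : W = {c₁, u, c₂, v} := hW
    rw [pow_two]
    refine le_antisymm (key_rank_le2 d r hr0 W c₁ u c₂ v _) ?_
    rw [hWeq]
    exact key_rank_ge d r hr0 hd c₁ u c₂ v hc12 huv huc₁ huc₂ hvc₁ hvc₂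
end

section
/- Let V₁, …, Vₙ be finite-dimensional vector spaces, T a full binary tree with leaves matched to 1,…,n, and r a positive integer. A tensor t ∈ V₁ ⊗ ⋯ ⊗ Vₙ satisfies: there exist subspaces U_v for every vertex v of T with dim U_v ≤ r, U_l ⊆ V_l for every leaf l, U_v ⊆ U_{v₁} ⊗ U_{v₂} for every node v with children v₁, v₂, and t ∈ U_root — if and only if for every vertex v of T, the flattening rank of t with respect to desc(v) (the leaf-descendants of v) is at most r. -/
/-- A full binary tree with leaves labelled by elements of `α`. -/
inductive LTree (α : Type*) : Type _
  | leaf : α → LTree α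
  | node : LTree α → LTree α → LTree α

namespace LTree

variable {α : Type*}

/-- The list of leaf labels, from left to right. -/
def leafList : LTree α → List α
  | leaf a => [a]
  | node l r => leafList l ++ leafList r

/-- The set of subtrees of a tree; each vertex corresponds to the subtree rooted at it. -/
def subtrees : LTree α → Set (LTree α)
  | leaf a => {leaf a}
  | node l r => {node l r} ∪ subtrees l ∪ subtrees r

/-- The finite set of leaf labels descending from (the root of) a tree. -/
def descFinset [DecidableEq α] : LTree α → Finset α
  | leaf a => {a}
  | node l r => descFinset l ∪ descFinset r

end LTree

/-- The coordinate model `⊗_{i ∈ S} V_i` where `V_i = 𝕜^{d i}`. -/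
def TSpace (𝕜 : Type*) [Field 𝕜] {n : ℕ} (d : Fin n → ℕ) (S : Finset (Fin n)) : Type _ :=
  (∀ i : {i // i ∈ S}, Fin (d i.1)) → 𝕜

noncomputable instance {𝕜 : Type*} [Field 𝕜] {n : ℕ} (d : Fin n → ℕ) (S : Finset (Fin n)) :
    AddCommGroup (TSpace 𝕜 d S) := Pi.addCommGroup

noncomputable instance {𝕜 : Type*} [Field 𝕜] {n : ℕ} (d : Fin n → ℕ) (S : Finset (Fin n)) :
    Module 𝕜 (TSpace 𝕜 d S) := Pi.module _ _ _

/-- The product (tensor product, in coordinates) of a tensor on the factors in `S₁` and a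
tensor on the factors in `S₂`, for disjoint `S₁`, `S₂`. -/
def combine {𝕜 : Type*} [Field 𝕜] {n : ℕ} (d : Fin n → ℕ) {S₁ S₂ : Finset (Fin n)}
    (f : TSpace 𝕜 d S₁) (g : TSpace 𝕜 d S₂) : TSpace 𝕜 d (S₁ ∪ S₂) :=
  fun v => f (fun i => v ⟨i.1, Finset.mem_union_left _ i.2⟩) *
    g (fun i => v ⟨i.1, Finset.mem_union_right _ i.2⟩)

/-- The tensor product `U₁ ⊗ U₂` of subspaces `U₁ ⊆ ⊗_{i∈S₁} V_i`, `U₂ ⊆ ⊗_{i∈S₂} V_i`,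
realised inside `⊗_{i ∈ S₁ ∪ S₂} V_i`. -/
noncomputable def mulSpan {𝕜 : Type*} [Field 𝕜] {n : ℕ} (d : Fin n → ℕ) {S₁ S₂ : Finset (Fin n)}
    (U₁ : Submodule 𝕜 (TSpace 𝕜 d S₁)) (U₂ : Submodule 𝕜 (TSpace 𝕜 d S₂)) :
    Submodule 𝕜 (TSpace 𝕜 d (S₁ ∪ S₂)) :=
  Submodule.span 𝕜 {h | ∃ f ∈ U₁, ∃ g ∈ U₂, h = combine d f g}

/-- An admissible system of subspaces witnessing membership in the tensor network
variety `TNS_{T,r}`: a subspace `U_v` of dimension at most `r` for each vertex `v`,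
with `U_v ⊆ U_{v₁} ⊗ U_{v₂}` at each node.  The predicate records the subspace at the
root; the subspaces at the other vertices are quantified existentially. -/
def goodSubspaces {𝕜 : Type*} [Field 𝕜] {n : ℕ} (d : Fin n → ℕ) (r : ℕ) :
    (T : LTree (Fin n)) → Submodule 𝕜 (TSpace 𝕜 d T.descFinset) → Prop
  | .leaf _, U => Module.finrank 𝕜 U ≤ r
  | .node l rt, U => Module.finrank 𝕜 U ≤ r ∧
      ∃ (U₁ : Submodule 𝕜 (TSpace 𝕜 d l.descFinset))
        (U₂ : Submodule 𝕜 (TSpace 𝕜 d rt.descFinset)),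
        goodSubspaces d r l U₁ ∧ goodSubspaces d r rt U₂ ∧ U ≤ mulSpan d U₁ U₂



open Finset in
lemma tensor_decomp {𝕜 : Type*} [Field 𝕜] {A1 A2 : Type*} [Fintype A1] [Fintype A2]
    [DecidableEq A2]
    (M : A1 → A2 → 𝕜) (U1 : Submodule 𝕜 (A1 → 𝕜)) (U2 : Submodule 𝕜 (A2 → 𝕜))
    (hcol : ∀ a2, (fun a1 => M a1 a2) ∈ U1) (hrow : ∀ a1, M a1 ∈ U2) :
    ∃ (k : ℕ) (f : Fin k → (A1 → 𝕜)) (g : Fin k → (A2 → 𝕜)),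
      (∀ j, f j ∈ U1) ∧ (∀ j, g j ∈ U2) ∧ ∀ a1 a2, M a1 a2 = ∑ j, f j a1 * g j a2 := by
  obtain ⟨q, hq⟩ := Submodule.exists_isCompl U2
  set π := U2.linearProjOfIsCompl q hq with hπ
  set e := Module.finBasis 𝕜 U2 with he
  refine ⟨_, fun j a1 => e.repr ⟨M a1, hrow a1⟩ j, fun j => (e j : A2 → 𝕜),
    ?_, fun j => (e j).2, ?_⟩
  · intro j
    set φ : (A2 → 𝕜) →ₗ[𝕜] 𝕜 :=
      (Finsupp.lapply j).comp (e.repr.toLinearMap.comp π) with hφdef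
    have key : ∀ a1, (⟨M a1, hrow a1⟩ : U2) = π (M a1) := fun a1 =>
      (Submodule.linearProjOfIsCompl_apply_left hq ⟨M a1, hrow a1⟩).symm
    have hφ : ∀ x : A2 → 𝕜, e.repr (π x) j = φ x := fun _ => rfl
    have this1 : (fun a1 => e.repr ⟨M a1, hrow a1⟩ j) =
        ∑ a2 : A2, (φ (Pi.single a2 1 : A2 → 𝕜)) • (fun a1 => M a1 a2) := by
      funext a1
      rw [Finset.sum_apply]
      have hM : M a1 = ∑ a2 : A2, M a1 a2 • (Pi.single a2 1 : A2 → 𝕜) := by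
        conv_lhs => rw [← Finset.univ_sum_single (M a1)]
        exact Finset.sum_congr rfl fun a2 _ => by
          rw [← Pi.single_smul, smul_eq_mul, mul_one]
      rw [key a1, hφ, hM, map_sum]
      simp only [map_smul, smul_eq_mul, Pi.smul_apply]
      exact Finset.sum_congr rfl fun a2 _ => by ring
    show (fun a1 => e.repr ⟨M a1, hrow a1⟩ j) ∈ U1
    rw [this1]
    exact Submodule.sum_mem _ fun a2 _ => Submodule.smul_mem _ _ (hcol a2)
  · intro a1 a2
    have h1 := Module.Basis.sum_repr e ⟨M a1, hrow a1⟩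
    have h2 : M a1 = ((∑ j, e.repr ⟨M a1, hrow a1⟩ j • e j : U2) : A2 → 𝕜) := by
      rw [h1]
    calc M a1 a2 = ((∑ j, e.repr ⟨M a1, hrow a1⟩ j • e j : U2) : A2 → 𝕜) a2 := by
          rw [← h2]
      _ = ∑ j, e.repr ⟨M a1, hrow a1⟩ j * (e j : A2 → 𝕜) a2 := by
          rw [Submodule.coe_sum, Finset.sum_apply]
          simp

section AuxTree

namespace LTree

variable {α : Type*}

lemma mem_descFinset [DecidableEq α] : ∀ (v : LTree α) (x : α),
    x ∈ v.descFinset ↔ x ∈ v.leafList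
  | leaf a, x => by simp [descFinset, leafList]
  | node l r, x => by
      simp [descFinset, leafList, mem_descFinset l, mem_descFinset r]

lemma nodup_left {l r : LTree α} (h : (node l r).leafList.Nodup) : l.leafList.Nodup :=
  (List.nodup_append.1 h).1

lemma nodup_right {l r : LTree α} (h : (node l r).leafList.Nodup) : r.leafList.Nodup :=
  (List.nodup_append.1 h).2.1

lemma desc_disjoint [DecidableEq α] {l r : LTree α}
    (h : (node l r).leafList.Nodup) : ∀ x ∈ l.descFinset, x ∉ r.descFinset := by
  intro x hxl hxr
  rw [mem_descFinset] at hxl hxr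
  exact (List.disjoint_of_nodup_append h) hxl hxr

lemma subtrees_desc_subset [DecidableEq α] :
    ∀ (v w : LTree α), w ∈ v.subtrees → w.descFinset ⊆ v.descFinset
  | leaf a, w, hw => by
      have hwe : w = leaf a := hw
      subst hwe; exact Finset.Subset.refl _
  | node l r, w, hw => by
      rcases hw with (hw | hw) | hw
      · have hwe : w = node l r := hw
        subst hwe; exact Finset.Subset.refl _
      · exact (subtrees_desc_subset l w hw).trans
          (Finset.subset_union_left (s₂ := r.descFinset))
      · exact (subtrees_desc_subset r w hw).trans
          (Finset.subset_union_right (s₁ := l.descFinset))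

end LTree

end AuxTree

section AuxSlice

variable {𝕜 : Type*} [Field 𝕜] {n : ℕ} (d : Fin n → ℕ)

noncomputable instance (S : Finset (Fin n)) : Module.Finite 𝕜 (TSpace 𝕜 d S) :=
  inferInstanceAs (Module.Finite 𝕜 ((∀ i : {i // i ∈ S}, Fin (d i.1)) → 𝕜))

/-- Partial evaluation (slicing): fix the coordinates outside `S₁` using `c`. -/
def sliceFun {S₁ S₂ : Finset (Fin n)}
    (c : ∀ i : {i // i ∈ S₂ \ S₁}, Fin (d i.1)) (s : TSpace 𝕜 d S₂) : TSpace 𝕜 d S₁ :=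
  fun a => s fun i => if h : i.1 ∈ S₁ then a ⟨i.1, h⟩
    else c ⟨i.1, Finset.mem_sdiff.2 ⟨i.2, h⟩⟩

lemma sliceFun_self {S : Finset (Fin n)} (c : ∀ i : {i // i ∈ S \ S}, Fin (d i.1))
    (s : TSpace 𝕜 d S) : sliceFun d c s = s :=
  funext fun a => congrArg s (funext fun i => dif_pos i.2)

lemma sliceFun_combine_left {Sw S₁ S₂ : Finset (Fin n)} (h2 : ∀ i ∈ S₂, i ∉ Sw)
    (c : ∀ i : {i // i ∈ (S₁ ∪ S₂) \ Sw}, Fin (d i.1))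
    (f : TSpace 𝕜 d S₁) (g : TSpace 𝕜 d S₂) :
    sliceFun d c (combine d f g) =
      g (fun i => c ⟨i.1, Finset.mem_sdiff.2
          ⟨Finset.mem_union_right _ i.2, h2 _ i.2⟩⟩) •
      sliceFun d (S₁ := Sw) (fun i => c ⟨i.1, Finset.mem_sdiff.2
          ⟨Finset.mem_union_left _ (Finset.mem_sdiff.1 i.2).1,
            (Finset.mem_sdiff.1 i.2).2⟩⟩) f := by
  funext a
  change f _ * g _ = g _ * f _
  rw [mul_comm]
  refine congrArg₂ (· * ·) (congrArg g (funext fun i => ?_)) rfl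
  exact dif_neg (h2 i.1 i.2)

lemma sliceFun_combine_right {Sw S₁ S₂ : Finset (Fin n)} (h1 : ∀ i ∈ S₁, i ∉ Sw)
    (c : ∀ i : {i // i ∈ (S₁ ∪ S₂) \ Sw}, Fin (d i.1))
    (f : TSpace 𝕜 d S₁) (g : TSpace 𝕜 d S₂) :
    sliceFun d c (combine d f g) =
      f (fun i => c ⟨i.1, Finset.mem_sdiff.2
          ⟨Finset.mem_union_left _ i.2, h1 _ i.2⟩⟩) •
      sliceFun d (S₁ := Sw) (fun i => c ⟨i.1, Finset.mem_sdiff.2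
          ⟨Finset.mem_union_right _ (Finset.mem_sdiff.1 i.2).1,
            (Finset.mem_sdiff.1 i.2).2⟩⟩) g := by
  funext a
  change f _ * g _ = f _ * g _
  refine congrArg₂ (· * ·) (congrArg f (funext fun i => ?_)) rfl
  exact dif_neg (h1 i.1 i.2)

end AuxSlice

section AuxCol

open Matrix

variable {𝕜 : Type*} [Field 𝕜] {n : ℕ} (d : Fin n → ℕ)

/-- The column space of the flattening with respect to `S`. -/
noncomputable def colSpace (S : Finset (Fin n)) (t : (∀ i, Fin (d i)) → 𝕜) :
    Submodule 𝕜 (TSpace 𝕜 d S) :=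
  Submodule.span 𝕜 (Set.range (flattening d S t)ᵀ)

lemma col_mem_colSpace (S : Finset (Fin n)) (t : (∀ i, Fin (d i)) → 𝕜)
    (b : ∀ i : {i // i ∉ S}, Fin (d i.1)) :
    (fun a => flattening d S t a b) ∈ colSpace d S t :=
  Submodule.subset_span ⟨b, rfl⟩

lemma finrank_colSpace (S : Finset (Fin n)) (t : (∀ i, Fin (d i)) → 𝕜) :
    Module.finrank 𝕜 (colSpace d S t) = flatteningRank d S t :=
  (Matrix.rank_eq_finrank_span_cols _).symm

lemma flatteningRank_le (S : Finset (Fin n)) (t : (∀ i, Fin (d i)) → 𝕜)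
    (U : Submodule 𝕜 (TSpace 𝕜 d S))
    (h : ∀ b, (fun a => flattening d S t a b) ∈ U) :
    flatteningRank d S t ≤ Module.finrank 𝕜 U := by
  rw [← finrank_colSpace]
  exact Submodule.finrank_mono (Submodule.span_le.2 (Set.range_subset_iff.2 h))

lemma colSpace_le_mulSpan {S₁ S₂ : Finset (Fin n)} (hd : ∀ i ∈ S₁, i ∉ S₂)
    (t : (∀ i, Fin (d i)) → 𝕜) :
    colSpace d (S₁ ∪ S₂) t ≤ mulSpan d (colSpace d S₁ t) (colSpace d S₂ t) := by
  rw [colSpace, Submodule.span_le]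
  rintro x ⟨b, rfl⟩
  set M : (∀ i : {i // i ∈ S₁}, Fin (d i.1)) → (∀ i : {i // i ∈ S₂}, Fin (d i.1)) → 𝕜 :=
    fun a1 a2 => t (fun i => if h1 : i ∈ S₁ then a1 ⟨i, h1⟩ else
      if h2 : i ∈ S₂ then a2 ⟨i, h2⟩ else
      b ⟨i, fun hm => (Finset.mem_union.1 hm).elim h1 h2⟩) with hMdef
  obtain ⟨k, f, g, hf, hg, hfg⟩ :=
    tensor_decomp M (colSpace d S₁ t) (colSpace d S₂ t)
      (fun a2 => col_mem_colSpace d S₁ t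
        (fun i => if h : i.1 ∈ S₂ then a2 ⟨i.1, h⟩ else
          b ⟨i.1, fun hm => (Finset.mem_union.1 hm).elim i.2 h⟩))
      (fun a1 => by
        have hrow : M a1 = fun a2 => flattening d S₂ t a2
            (fun i => if h : i.1 ∈ S₁ then a1 ⟨i.1, h⟩ else
              b ⟨i.1, fun hm => (Finset.mem_union.1 hm).elim h i.2⟩) := by
          funext a2
          refine congrArg t (funext fun i => ?_)
          by_cases h1 : i ∈ S₁
          · have h2 : i ∉ S₂ := hd i h1
            simp only [dif_pos h1, dif_neg h2]
          · by_cases h2 : i ∈ S₂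
            · simp only [dif_neg h1, dif_pos h2]
            · simp only [dif_neg h1, dif_neg h2]
        rw [hrow]
        exact col_mem_colSpace d S₂ t _)
  have key : (flattening d (S₁ ∪ S₂) t)ᵀ b = ∑ j, combine d (f j) (g j) := by
    funext a
    rw [show (∑ j, combine d (f j) (g j)) a = ∑ j, combine d (f j) (g j) a from
      Finset.sum_apply _ _ _]
    have hmerge : (flattening d (S₁ ∪ S₂) t)ᵀ b a =
        M (fun i => a ⟨i.1, Finset.mem_union_left _ i.2⟩)
          (fun i => a ⟨i.1, Finset.mem_union_right _ i.2⟩) := by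
      refine congrArg t (funext fun i => ?_)
      by_cases h1 : i ∈ S₁
      · simp only [dif_pos (Finset.mem_union_left S₂ h1), dif_pos h1]
      · by_cases h2 : i ∈ S₂
        · simp only [dif_pos (Finset.mem_union_right S₁ h2), dif_neg h1, dif_pos h2]
        · have hu : i ∉ S₁ ∪ S₂ := fun hm => (Finset.mem_union.1 hm).elim h1 h2
          simp only [dif_neg hu, dif_neg h1, dif_neg h2]
    have h3 := hfg (fun i => a ⟨i.1, Finset.mem_union_left _ i.2⟩)
      (fun i => a ⟨i.1, Finset.mem_union_right _ i.2⟩)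
    refine hmerge.trans (h3.trans ?_)
    exact Finset.sum_congr rfl fun j _ => rfl
  rw [key]
  exact Submodule.sum_mem _ fun j _ =>
    Submodule.subset_span ⟨f j, hf j, g j, hg j, rfl⟩

end AuxCol

section AuxMain

open Matrix

variable {𝕜 : Type*} [Field 𝕜] {n : ℕ} (d : Fin n → ℕ)

lemma key_fwd {r : ℕ} : ∀ (v : LTree (Fin n)), v.leafList.Nodup →
    ∀ (U : Submodule 𝕜 (TSpace 𝕜 d v.descFinset)), goodSubspaces d r v U →
    ∀ w ∈ v.subtrees, ∃ W : Submodule 𝕜 (TSpace 𝕜 d w.descFinset),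
      Module.finrank 𝕜 W ≤ r ∧ ∀ s ∈ U,
        ∀ c : ∀ i : {i // i ∈ v.descFinset \ w.descFinset}, Fin (d i.1),
          sliceFun d c s ∈ W
  | .leaf a, _, U, hU, w, hw => by
      have hwe : w = .leaf a := hw
      subst hwe
      exact ⟨U, hU, fun s hs c => by rw [sliceFun_self]; exact hs⟩
  | .node l rt, hnd, U, hU, w, hw => by
      obtain ⟨hUr, U₁, U₂, h₁, h₂, hle⟩ := hU
      rcases hw with (hw | hw) | hw
      · have hwe : w = .node l rt := hw
        subst hwe
        exact ⟨U, hUr, fun s hs c => by rw [sliceFun_self]; exact hs⟩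
      · obtain ⟨W, hWr, hWmem⟩ := key_fwd l (LTree.nodup_left hnd) U₁ h₁ w hw
        refine ⟨W, hWr, fun s hs c => ?_⟩
        have hdis : ∀ i ∈ rt.descFinset, i ∉ w.descFinset := fun i hir hiw =>
          LTree.desc_disjoint hnd i (LTree.subtrees_desc_subset l w hw hiw) hir
        refine Submodule.span_induction
          (p := fun x _ => sliceFun d c x ∈ W) ?_ ?_ ?_ ?_ (hle hs)
        · rintro x ⟨f, hf, g, hg, rfl⟩
          have heq : sliceFun d c (combine d f g) = _ :=
            sliceFun_combine_left d hdis c f g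
          rw [heq]
          exact W.smul_mem _ (hWmem f hf _)
        · exact W.zero_mem
        · intro x y _ _ hx hy
          exact W.add_mem hx hy
        · intro a x _ hx
          exact W.smul_mem a hx
      · obtain ⟨W, hWr, hWmem⟩ := key_fwd rt (LTree.nodup_right hnd) U₂ h₂ w hw
        refine ⟨W, hWr, fun s hs c => ?_⟩
        have hdis : ∀ i ∈ l.descFinset, i ∉ w.descFinset := fun i hil hiw =>
          LTree.desc_disjoint hnd i hil (LTree.subtrees_desc_subset rt w hw hiw)
        refine Submodule.span_induction
          (p := fun x _ => sliceFun d c x ∈ W) ?_ ?_ ?_ ?_ (hle hs)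
        · rintro x ⟨f, hf, g, hg, rfl⟩
          have heq : sliceFun d c (combine d f g) = _ :=
            sliceFun_combine_right d hdis c f g
          rw [heq]
          exact W.smul_mem _ (hWmem g hg _)
        · exact W.zero_mem
        · intro x y _ _ hx hy
          exact W.add_mem hx hy
        · intro a x _ hx
          exact W.smul_mem a hx

lemma good_colSpace {r : ℕ} (t : (∀ i, Fin (d i)) → 𝕜) :
    ∀ (v : LTree (Fin n)), v.leafList.Nodup →
    (∀ w ∈ v.subtrees, flatteningRank d w.descFinset t ≤ r) →
    goodSubspaces d r v (colSpace d v.descFinset t)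
  | .leaf a, _, h => by
      show Module.finrank 𝕜 (colSpace d (LTree.leaf a).descFinset t) ≤ r
      rw [finrank_colSpace]
      exact h _ rfl
  | .node l rt, hnd, h => by
      refine ⟨?_, colSpace d l.descFinset t, colSpace d rt.descFinset t,
        good_colSpace t l (LTree.nodup_left hnd) (fun w hw => h w (Or.inl (Or.inr hw))),
        good_colSpace t rt (LTree.nodup_right hnd) (fun w hw => h w (Or.inr hw)), ?_⟩
      · rw [show Module.finrank 𝕜 (colSpace d (LTree.node l rt).descFinset t)
            = flatteningRank d (LTree.node l rt).descFinset t from finrank_colSpace d _ t]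
        exact h _ (Or.inl (Or.inl rfl))
      · exact colSpace_le_mulSpan d (LTree.desc_disjoint hnd) t

end AuxMain

/-- Equivalence of the two definitions of the variety of tensor network states: a tensor
`t` admits a system of subspaces `U_v` of dimension at most `r` (with `U_l ⊆ V_l` at the
leaves, `U_v ⊆ U_{v₁} ⊗ U_{v₂}` at the nodes, and `t ∈ U_root`) if and only if for every
vertex `v` the flattening rank of `t` with respect to the leaf-descendants of `v` is at
most `r`. -/
theorem stmt_18 {𝕜 : Type*} [Field 𝕜] {n : ℕ} (d : Fin n → ℕ) (r : ℕ) (hr : 0 < r)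
    (T : LTree (Fin n)) (hnodup : T.leafList.Nodup)
    (hall : T.descFinset = Finset.univ)
    (t : (∀ i, Fin (d i)) → 𝕜) :
    (∃ U : Submodule 𝕜 (TSpace 𝕜 d T.descFinset),
        goodSubspaces d r T U ∧
        (fun v : ∀ i : {i // i ∈ T.descFinset}, Fin (d i.1) =>
            t fun i => v ⟨i, by simp [hall]⟩) ∈ U) ↔
      ∀ v ∈ T.subtrees, flatteningRank d v.descFinset t ≤ r := by
  constructor
  · rintro ⟨U, hU, ht⟩ w hw
    obtain ⟨W, hWr, hW⟩ := key_fwd d T hnodup U hU w hw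
    refine le_trans (flatteningRank_le d _ t W fun b => ?_) hWr
    exact hW _ ht (fun i => b ⟨i.1, (Finset.mem_sdiff.1 i.2).2⟩)
  · intro h
    refine ⟨colSpace d T.descFinset t, good_colSpace d t T hnodup h, ?_⟩
    have hmem : ∀ j : Fin n, j ∈ T.descFinset := fun j => by
      rw [hall]; exact Finset.mem_univ j
    have hb : ∀ i : {i // i ∉ T.descFinset}, Fin (d i.1) := fun i =>
      (i.2 (hmem i.1)).elim
    have hcol := col_mem_colSpace d T.descFinset t hb
    have heq : (fun a => flattening d T.descFinset t a hb) =
        (fun v : ∀ i : {i // i ∈ T.descFinset}, Fin (d i.1) =>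
            t fun i => v ⟨i, by simp [hall]⟩) := by
      funext v
      refine congrArg t (funext fun j => ?_)
      have hj : j ∈ T.descFinset := hmem j
      rw [dif_pos hj]
    rw [← heq]
    exact hcol
end

section
/- Hackbusch's conjecture: for every k ≥ 1 and r ≥ 2, and for every permutation σ of {1, …, 2^k} (ordering of the leaves of the train-track tree), there exists a tensor t ∈ V₁ ⊗ ⋯ ⊗ V_{2^k} (with dim V_i ≥ r) such that the flattening rank of t with respect to every dyadic interval of {1,…,2^k} is at most r, yet for some 1 ≤ j ≤ 2^k the flattening rank of t with respect to {σ(1), …, σ(j)} is at least r^{⌈k/2⌉}. (Hence HF(r,k) ⊄ TT(r^{⌈k/2⌉} − 1, 2^k) for any leaf ordering.) -/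
/-- membership in the dyadic interval `[M·2^s, (M+1)·2^s)` -/
def inIv (s M x : ℕ) : Prop := M * 2^s ≤ x ∧ x < (M+1) * 2^s

instance (s M x : ℕ) : Decidable (inIv s M x) := inferInstanceAs (Decidable (_ ∧ _))

/-- the dyadic interval `(s, M)` splits the pair `pr`. -/
def splits (s M : ℕ) (pr : ℕ × ℕ) : Prop :=
  (inIv s M pr.1 ∧ ¬ inIv s M pr.2) ∨ (¬ inIv s M pr.1 ∧ inIv s M pr.2)

lemma inIv_div {s M z : ℕ} (h : inIv s M z) : z / 2^s = M :=
  Nat.div_eq_of_lt_le h.1 h.2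

lemma dyadic_subset {s1 s2 M1 M2 x : ℕ} (hs : s1 ≤ s2) (h1 : inIv s1 M1 x)
    (h2 : inIv s2 M2 x) : ∀ y, inIv s1 M1 y → inIv s2 M2 y := by
  obtain ⟨h1l, h1r⟩ := h1
  obtain ⟨h2l, h2r⟩ := h2
  set a := 2^s1 with ha
  set t := 2^(s2-s1) with ht
  have hb : 2^s2 = t * a := by rw [ht, ha, ← pow_add]; congr 1; omega
  rw [hb] at h2l h2r
  rw [← mul_assoc] at h2l
  have h2r' : x < (M2*t + t) * a := by
    have he : (M2+1)*(t*a) = (M2*t+t)*a := by ring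
    rwa [he] at h2r
  have c1 : M2 * t ≤ M1 := by
    by_contra hc
    push_neg at hc
    have hle : (M1+1) * a ≤ (M2*t) * a := Nat.mul_le_mul_right a hc
    linarith
  have c2 : M1 + 1 ≤ M2*t + t := by
    by_contra hc
    push_neg at hc
    have hle : (M2*t+t) * a ≤ M1 * a := Nat.mul_le_mul_right a (by omega)
    linarith
  rintro y ⟨hyl, hyr⟩
  constructor
  · rw [hb, ← mul_assoc]
    calc (M2*t)*a ≤ M1 * a := Nat.mul_le_mul_right a c1
      _ ≤ y := hyl
  · rw [hb]
    have he : (M2+1)*(t*a) = (M2*t+t)*a := by ring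
    rw [he]
    calc y < (M1+1)*a := hyr
      _ ≤ (M2*t+t)*a := Nat.mul_le_mul_right a c2

lemma dyadic_laminar {s1 s2 M1 M2 x : ℕ} (h1 : inIv s1 M1 x) (h2 : inIv s2 M2 x) :
    (∀ y, inIv s1 M1 y → inIv s2 M2 y) ∨ (∀ y, inIv s2 M2 y → inIv s1 M1 y) := by
  rcases le_total s1 s2 with h | h
  · exact Or.inl (dyadic_subset h h1 h2)
  · exact Or.inr (dyadic_subset h h2 h1)

lemma minmax (k m M : ℕ) (g : Fin (2^k) → ℕ) (hg : Function.Injective g)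
    (hm : 1 ≤ m) (hMk : (M+1) * 2^m ≤ 2^k) :
    ∃ x y : Fin (2^k), inIv m M ↑x ∧ inIv m M ↑y ∧ g x < g y ∧
      ∀ z : Fin (2^k), inIv m M ↑z → g x ≤ g z ∧ g z ≤ g y := by
  have h2m : 2 ≤ 2^m := by
    calc 2 = 2^1 := rfl
    _ ≤ 2^m := Nat.pow_le_pow_right (by norm_num) hm
  have hsum : (M+1) * 2^m = M * 2^m + 2^m := by ring
  have hlt0 : M * 2^m < 2^k := by omega
  have hlt1 : M * 2^m + 1 < 2^k := by omega
  set z0 : Fin (2^k) := ⟨M * 2^m, hlt0⟩ with hz0d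
  set z1 : Fin (2^k) := ⟨M * 2^m + 1, hlt1⟩ with hz1d
  have hv0 : (z0 : ℕ) = M * 2^m := rfl
  have hv1 : (z1 : ℕ) = M * 2^m + 1 := rfl
  have hz0 : inIv m M ↑z0 := ⟨by rw [hv0], by rw [hv0]; omega⟩
  have hz1 : inIv m M ↑z1 := ⟨by rw [hv1]; omega, by rw [hv1]; omega⟩
  set F : Finset (Fin (2^k)) := Finset.univ.filter (fun z => inIv m M ↑z) with hF
  have hz0F : z0 ∈ F := by simp [hF, hz0]
  have hz1F : z1 ∈ F := by simp [hF, hz1]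
  obtain ⟨x, hxF, hxmin⟩ := Finset.exists_min_image F g ⟨z0, hz0F⟩
  obtain ⟨y, hyF, hymax⟩ := Finset.exists_max_image F g ⟨z0, hz0F⟩
  have hxI : inIv m M ↑x := by simpa [hF] using hxF
  have hyI : inIv m M ↑y := by simpa [hF] using hyF
  refine ⟨x, y, hxI, hyI, ?_, ?_⟩
  · by_contra hcon
    push_neg at hcon
    have e1 := hxmin z0 hz0F
    have e2 := hxmin z1 hz1F
    have e3 := hymax z0 hz0F
    have e4 := hymax z1 hz1F
    have : g z0 = g z1 := by omega
    have := hg this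
    rw [hz0d, hz1d, Fin.mk.injEq] at this
    omega
  · intro z hz
    have hzF : z ∈ F := by simp [hF, hz]
    exact ⟨hxmin z hzF, hymax z hzF⟩

theorem key (k : ℕ) (g : Fin (2^k) → ℕ) (hg : Function.Injective g) :
    ∀ m, 1 ≤ m → ∀ M, (M+1) * 2^m ≤ 2^k →
    ∃ (L : List (Fin (2^k) × Fin (2^k))) (J : ℕ),
      L.length = (m+1)/2 ∧
      (∀ pr ∈ L, inIv m M (pr.1 : ℕ) ∧ inIv m M (pr.2 : ℕ)) ∧
      (∀ pr ∈ L, g pr.1 < J ∧ J ≤ g pr.2) ∧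
      (∀ s M', ∀ pr ∈ L, ∀ pr' ∈ L,
        splits s M' ((pr.1 : ℕ), (pr.2 : ℕ)) → splits s M' ((pr'.1 : ℕ), (pr'.2 : ℕ)) →
        pr = pr') ∧
      List.Pairwise (fun pr pr' => pr.1 ≠ pr'.1 ∧ pr.1 ≠ pr'.2 ∧ pr.2 ≠ pr'.1 ∧ pr.2 ≠ pr'.2) L := by
  intro m
  induction m using Nat.strong_induction_on with
  | _ m IH =>
    intro hm M hMk
    by_cases hm2 : m ≤ 2
    · -- base case : m = 1 or m = 2, a single pair
      obtain ⟨x, y, hx, hy, hxy, hbound⟩ := minmax k m M g hg hm hMk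
      refine ⟨[(x, y)], g y, ?_, ?_, ?_, ?_, ?_⟩
      · simp only [List.length_singleton]
        omega
      · intro pr hpr
        rw [List.mem_singleton] at hpr
        subst hpr
        exact ⟨hx, hy⟩
      · intro pr hpr
        rw [List.mem_singleton] at hpr
        subst hpr
        exact ⟨hxy, le_refl _⟩
      · intro s M' pr hpr pr' hpr' _ _
        rw [List.mem_singleton] at hpr hpr'
        rw [hpr, hpr']
      · simp
    · -- step case : m ≥ 3
      obtain ⟨x, y, hx, hy, hxy, hbound⟩ := minmax k m M g hg hm hMk
      have h2m : 2^m = 2^(m-2) * 4 := by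
        have hm' : m - 2 + 2 = m := by omega
        calc 2^m = 2^(m-2+2) := by rw [hm']
          _ = 2^(m-2) * 2^2 := pow_add 2 (m-2) 2
          _ = 2^(m-2) * 4 := rfl
      obtain ⟨u, hu4, hua, hub⟩ :
          ∃ u, u < 4 ∧ 4*M+u ≠ (x : ℕ)/2^(m-2) ∧ 4*M+u ≠ (y : ℕ)/2^(m-2) := by
        by_contra hcon
        push_neg at hcon
        have d : ∀ u, u < 4 → 4*M+u = (x : ℕ)/2^(m-2) ∨ 4*M+u = (y : ℕ)/2^(m-2) := by
          intro u hu
          by_cases h : 4*M+u = (x : ℕ)/2^(m-2)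
          · exact Or.inl h
          · exact Or.inr (hcon u hu h)
        have d0 := d 0 (by norm_num)
        have d1 := d 1 (by norm_num)
        have d2 := d 2 (by norm_num)
        have d3 := d 3 (by norm_num)
        rcases d0 with h0 | h0 <;> rcases d1 with h1 | h1 <;>
          rcases d2 with h2 | h2 <;> rcases d3 with h3 | h3 <;> omega
      have hin : ((4*M+u)+1) * 2^(m-2) ≤ 2^k := by
        calc ((4*M+u)+1) * 2^(m-2) ≤ (4*M+4) * 2^(m-2) := Nat.mul_le_mul_right _ (by omega)
          _ = (M+1) * (2^(m-2) * 4) := by ring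
          _ = (M+1) * 2^m := by rw [← h2m]
          _ ≤ 2^k := hMk
      obtain ⟨L', J', hlen, hiv, hJ, hsplit, hpw⟩ :=
        IH (m-2) (by omega) (by omega) (4*M+u) hin
      have hQsub : ∀ z, inIv (m-2) (4*M+u) z → inIv m M z := by
        rintro z ⟨hz1, hz2⟩
        constructor
        · calc M * 2^m = (4*M) * 2^(m-2) := by rw [h2m]; ring
            _ ≤ (4*M+u) * 2^(m-2) := Nat.mul_le_mul_right _ (by omega)
            _ ≤ z := hz1
        · calc z < ((4*M+u)+1) * 2^(m-2) := hz2
            _ ≤ (4*M+4) * 2^(m-2) := Nat.mul_le_mul_right _ (by omega)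
            _ = M * 2^m + 2^m := by rw [h2m]; ring
            _ = (M+1) * 2^m := by ring
      have hxQ : ¬ inIv (m-2) (4*M+u) (x : ℕ) := fun h => hua (inIv_div h).symm
      have hyQ : ¬ inIv (m-2) (4*M+u) (y : ℕ) := fun h => hub (inIv_div h).symm
      have hL'ne : L' ≠ [] := by
        intro h
        rw [h] at hlen
        simp at hlen
        omega
      obtain ⟨pr0, hpr0⟩ := List.exists_mem_of_ne_nil L' hL'ne
      refine ⟨(x, y) :: L', J', ?_, ?_, ?_, ?_, ?_⟩
      · simp only [List.length_cons, hlen]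
        omega
      · intro pr hpr
        rcases List.mem_cons.mp hpr with rfl | htl
        · exact ⟨hx, hy⟩
        · obtain ⟨h1, h2⟩ := hiv pr htl
          exact ⟨hQsub _ h1, hQsub _ h2⟩
      · intro pr hpr
        rcases List.mem_cons.mp hpr with rfl | htl
        · obtain ⟨hJ1, hJ2⟩ := hJ pr0 hpr0
          obtain ⟨hiv1, hiv2⟩ := hiv pr0 hpr0
          have hb1 := (hbound pr0.1 (hQsub _ hiv1)).1
          have hb2 := (hbound pr0.2 (hQsub _ hiv2)).2
          show g x < J' ∧ J' ≤ g y
          exact ⟨by omega, by omega⟩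
        · exact hJ pr htl
      · -- at most one split pair per dyadic interval
        have hmix : ∀ s M', ∀ pr'' ∈ L', splits s M' ((x : ℕ), (y : ℕ)) →
            splits s M' ((pr''.1 : ℕ), (pr''.2 : ℕ)) → False := by
          intro s M' pr'' hm'' hsxy hspr
          obtain ⟨hq1, hq2⟩ := hiv pr'' hm''
          -- some endpoint of pr'' lies in both Q and D
          have hz : ∃ z : ℕ, inIv (m-2) (4*M+u) z ∧ inIv s M' z := by
            rcases hspr with ⟨hin1, _⟩ | ⟨_, hin2⟩
            · exact ⟨_, hq1, hin1⟩
            · exact ⟨_, hq2, hin2⟩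
          obtain ⟨z, hzQ, hzD⟩ := hz
          rcases dyadic_laminar hzQ hzD with hQD | hDQ
          · -- Q ⊆ D : both endpoints of pr'' are in D, contradicting the split
            rcases hspr with ⟨_, hno⟩ | ⟨hno, _⟩
            · exact hno (hQD _ hq2)
            · exact hno (hQD _ hq1)
          · -- D ⊆ Q : x and y are not in D, contradicting the split
            have hxD : ¬ inIv s M' (x : ℕ) := fun h => hxQ (hDQ _ h)
            have hyD : ¬ inIv s M' (y : ℕ) := fun h => hyQ (hDQ _ h)
            rcases hsxy with ⟨hin1, _⟩ | ⟨_, hin2⟩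
            · exact hxD hin1
            · exact hyD hin2
        intro s M' pr hpr pr' hpr' hs hs'
        rcases List.mem_cons.mp hpr with rfl | htl <;>
          rcases List.mem_cons.mp hpr' with rfl | htl'
        · rfl
        · exact (hmix s M' pr' htl' hs hs').elim
        · exact (hmix s M' pr htl hs' hs).elim
        · exact hsplit s M' pr htl pr' htl' hs hs'
      · rw [List.pairwise_cons]
        refine ⟨?_, hpw⟩
        intro pr hpr
        obtain ⟨h1, h2⟩ := hiv pr hpr
        refine ⟨?_, ?_, ?_, ?_⟩
        · show x ≠ pr.1
          intro h; rw [h] at hxQ; exact hxQ h1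
        · show x ≠ pr.2
          intro h; rw [h] at hxQ; exact hxQ h2
        · show y ≠ pr.1
          intro h; rw [h] at hyQ; exact hyQ h1
        · show y ≠ pr.2
          intro h; rw [h] at hyQ; exact hyQ h2

section PairTensor

variable {𝕜 : Type*} [Field 𝕜] {ι : Type*} [Fintype ι] [DecidableEq ι]

/-- indicator function: 1 if `y` has value `w`, else 0. -/
def pind (r : ℕ) (w : Fin r) {m : ℕ} (y : Fin m) : ℕ := if (y : ℕ) = (w : ℕ) then 1 else 0

/-- the tensor built from a collection of pairs `(p i, q i)`: product of "identity matrices"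
on each pair. -/
def pairTensor (d : ι → ℕ) (r c : ℕ) (p q : Fin c → ι) : (∀ i, Fin (d i)) → 𝕜 :=
  fun x => ∏ i : Fin c, ∑ w : Fin r, (pind r w (x (p i)) : 𝕜) * (pind r w (x (q i)) : 𝕜)

lemma rank_submatrix_le' {α β γ' δ : Type*} [Fintype α] [Fintype β] [Fintype γ'] [Fintype δ]
    [DecidableEq α] [DecidableEq β]
    (M : Matrix α β 𝕜) (f : γ' → α) (g : δ → β) : (M.submatrix f g).rank ≤ M.rank := by
  have h : M.submatrix f g =
      (Matrix.of fun (i : γ') (a : α) => if f i = a then (1 : 𝕜) else 0) *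
        (M * Matrix.of fun (b : β) (j : δ) => if g j = b then (1 : 𝕜) else 0) := by
    ext i j
    simp [Matrix.mul_apply, Matrix.submatrix_apply]
  rw [h]
  exact (Matrix.rank_mul_le_right _ _).trans (Matrix.rank_mul_le_left _ _)

theorem pairTensor_flatteningRank_le (d : ι → ℕ) (r c : ℕ) (p q : Fin c → ι) (S : Finset ι) :
    flatteningRank d S (pairTensor (𝕜 := 𝕜) d r c p q) ≤
      r ^ (Finset.univ.filter
        (fun i : Fin c => (p i ∈ S ∧ q i ∉ S) ∨ (p i ∉ S ∧ q i ∈ S))).card := by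
  classical
  set T : Finset (Fin c) :=
    Finset.univ.filter (fun i : Fin c => (p i ∈ S ∧ q i ∉ S) ∨ (p i ∉ S ∧ q i ∈ S)) with hT
  set W := ({i : Fin c // i ∈ T} → Fin r)
  set P : Matrix (∀ i : {i // i ∈ S}, Fin (d i.1)) W 𝕜 := fun a v =>
    (∏ i : Fin c, if h : p i ∈ S ∧ q i ∈ S then
        (∑ w : Fin r, (pind r w (a ⟨p i, h.1⟩) : 𝕜) * (pind r w (a ⟨q i, h.2⟩) : 𝕜)) else 1) *
    ∏ j : {i : Fin c // i ∈ T},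
      (if h : p j.1 ∈ S then (pind r (v j) (a ⟨p j.1, h⟩) : 𝕜)
       else if h : q j.1 ∈ S then (pind r (v j) (a ⟨q j.1, h⟩) : 𝕜) else 1) with hP
  set Q : Matrix W (∀ i : {i // i ∉ S}, Fin (d i.1)) 𝕜 := fun v b =>
    (∏ i : Fin c, if h : p i ∉ S ∧ q i ∉ S then
        (∑ w : Fin r, (pind r w (b ⟨p i, h.1⟩) : 𝕜) * (pind r w (b ⟨q i, h.2⟩) : 𝕜)) else 1) *
    ∏ j : {i : Fin c // i ∈ T},
      (if h : q j.1 ∉ S then (pind r (v j) (b ⟨q j.1, h⟩) : 𝕜)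
       else if h : p j.1 ∉ S then (pind r (v j) (b ⟨p j.1, h⟩) : 𝕜) else 1) with hQ
  have key : flattening d S (pairTensor (𝕜 := 𝕜) d r c p q) = P * Q := by
    ext a b
    set X : ∀ l, Fin (d l) := fun l => if h : l ∈ S then a ⟨l, h⟩ else b ⟨l, h⟩ with hX
    have hent : flattening d S (pairTensor (𝕜 := 𝕜) d r c p q) a b
        = ∏ i : Fin c, ∑ w : Fin r, (pind r w (X (p i)) : 𝕜) * (pind r w (X (q i)) : 𝕜) := rfl
    rw [hent, Matrix.mul_apply]
    have step1 : ∀ v : W, P a v * Q v b =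
        ((∏ i : Fin c, if h : p i ∈ S ∧ q i ∈ S then
            (∑ w : Fin r, (pind r w (a ⟨p i, h.1⟩) : 𝕜) * (pind r w (a ⟨q i, h.2⟩) : 𝕜)) else 1) *
         (∏ i : Fin c, if h : p i ∉ S ∧ q i ∉ S then
            (∑ w : Fin r, (pind r w (b ⟨p i, h.1⟩) : 𝕜) * (pind r w (b ⟨q i, h.2⟩) : 𝕜)) else 1)) *
        ∏ j : {i : Fin c // i ∈ T},
          ((if h : p j.1 ∈ S then (pind r (v j) (a ⟨p j.1, h⟩) : 𝕜)
            else if h : q j.1 ∈ S then (pind r (v j) (a ⟨q j.1, h⟩) : 𝕜) else 1) *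
           (if h : q j.1 ∉ S then (pind r (v j) (b ⟨q j.1, h⟩) : 𝕜)
            else if h : p j.1 ∉ S then (pind r (v j) (b ⟨p j.1, h⟩) : 𝕜) else 1)) := by
      intro v
      rw [hP, hQ]
      dsimp only
      rw [Finset.prod_mul_distrib]
      ring
    rw [Finset.sum_congr rfl (fun v _ => step1 v), ← Finset.mul_sum]
    have step2 : (∑ v : W, ∏ j : {i : Fin c // i ∈ T},
          ((if h : p j.1 ∈ S then (pind r (v j) (a ⟨p j.1, h⟩) : 𝕜)
            else if h : q j.1 ∈ S then (pind r (v j) (a ⟨q j.1, h⟩) : 𝕜) else 1) *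
           (if h : q j.1 ∉ S then (pind r (v j) (b ⟨q j.1, h⟩) : 𝕜)
            else if h : p j.1 ∉ S then (pind r (v j) (b ⟨p j.1, h⟩) : 𝕜) else 1)))
        = ∏ j : {i : Fin c // i ∈ T}, ∑ w : Fin r,
          ((if h : p j.1 ∈ S then (pind r w (a ⟨p j.1, h⟩) : 𝕜)
            else if h : q j.1 ∈ S then (pind r w (a ⟨q j.1, h⟩) : 𝕜) else 1) *
           (if h : q j.1 ∉ S then (pind r w (b ⟨q j.1, h⟩) : 𝕜)
            else if h : p j.1 ∉ S then (pind r w (b ⟨p j.1, h⟩) : 𝕜) else 1)) := by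
      rw [Finset.prod_univ_sum]
      rw [← Fintype.piFinset_univ]
    rw [step2]
    -- identify the split part
    have split_eq : ∀ j : {i : Fin c // i ∈ T},
        (∑ w : Fin r,
          ((if h : p j.1 ∈ S then (pind r w (a ⟨p j.1, h⟩) : 𝕜)
            else if h : q j.1 ∈ S then (pind r w (a ⟨q j.1, h⟩) : 𝕜) else 1) *
           (if h : q j.1 ∉ S then (pind r w (b ⟨q j.1, h⟩) : 𝕜)
            else if h : p j.1 ∉ S then (pind r w (b ⟨p j.1, h⟩) : 𝕜) else 1)))
        = ∑ w : Fin r, (pind r w (X (p j.1)) : 𝕜) * (pind r w (X (q j.1)) : 𝕜) := by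
      rintro ⟨i, hi⟩
      rw [hT, Finset.mem_filter] at hi
      rcases hi.2 with ⟨hp, hq⟩ | ⟨hp, hq⟩
      · apply Finset.sum_congr rfl
        intro w _
        simp only [hX]
        simp [hp, hq]
      · apply Finset.sum_congr rfl
        intro w _
        simp only [hX]
        rw [mul_comm]
        simp [hp, hq]
    rw [Finset.prod_congr rfl (fun j _ => split_eq j)]
    -- identify the non-split part
    have nonsplit_eq :
        ((∏ i : Fin c, if h : p i ∈ S ∧ q i ∈ S then
            (∑ w : Fin r, (pind r w (a ⟨p i, h.1⟩) : 𝕜) * (pind r w (a ⟨q i, h.2⟩) : 𝕜)) else 1) *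
         (∏ i : Fin c, if h : p i ∉ S ∧ q i ∉ S then
            (∑ w : Fin r, (pind r w (b ⟨p i, h.1⟩) : 𝕜) * (pind r w (b ⟨q i, h.2⟩) : 𝕜)) else 1))
        = ∏ i : Fin c, (if i ∈ T then 1 else
            ∑ w : Fin r, (pind r w (X (p i)) : 𝕜) * (pind r w (X (q i)) : 𝕜)) := by
      rw [← Finset.prod_mul_distrib]
      apply Finset.prod_congr rfl
      intro i _
      by_cases hp : p i ∈ S <;> by_cases hq : q i ∈ S
      · have hiT : i ∉ T := by simp [hT, hp, hq]
        simp only [hX]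
        simp [hp, hq, hiT]
      · have hiT : i ∈ T := by simp [hT, hp, hq]
        simp only [hX]
        simp [hp, hq, hiT]
      · have hiT : i ∈ T := by simp [hT, hp, hq]
        simp only [hX]
        simp [hp, hq, hiT]
      · have hiT : i ∉ T := by simp [hT, hp, hq]
        simp only [hX]
        simp [hp, hq, hiT]
    rw [nonsplit_eq]
    -- combine
    rw [Finset.prod_coe_sort T (fun i => ∑ w : Fin r, (pind r w (X (p i)) : 𝕜) * (pind r w (X (q i)) : 𝕜))]
    have flip : ∀ i : Fin c, (if i ∈ T then (1:𝕜) else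
        ∑ w : Fin r, (pind r w (X (p i)) : 𝕜) * (pind r w (X (q i)) : 𝕜))
        = (if i ∈ Tᶜ then ∑ w : Fin r, (pind r w (X (p i)) : 𝕜) * (pind r w (X (q i)) : 𝕜) else 1) := by
      intro i
      by_cases h : i ∈ T <;> simp [h]
    rw [Finset.prod_congr rfl (fun i _ => flip i), Fintype.prod_extend_by_one,
      mul_comm, Finset.prod_mul_prod_compl]
  rw [flatteningRank, key]
  calc (P * Q).rank ≤ P.rank := Matrix.rank_mul_le_left P Q
    _ ≤ Fintype.card W := Matrix.rank_le_card_width P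
    _ = r ^ T.card := by
        rw [Fintype.card_fun, Fintype.card_fin, Fintype.card_coe]
  

noncomputable def emb (d : ι → ℕ) (r c : ℕ) (hr : 0 < r) (hd : ∀ l, r ≤ d l) (p : Fin c → ι)
    {P : ι → Prop} (v : Fin c → Fin r) : ∀ i : {i : ι // P i}, Fin (d i.1) := fun l =>
  if h : ∃ i, p i = l.1 then ⟨v h.choose, lt_of_lt_of_le (v h.choose).2 (hd l.1)⟩
  else ⟨0, lt_of_lt_of_le hr (hd l.1)⟩

set_option linter.unusedSectionVars false in
lemma emb_val (d : ι → ℕ) (r c : ℕ) (hr : 0 < r) (hd : ∀ l, r ≤ d l) (p : Fin c → ι)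
    {P : ι → Prop} (v : Fin c → Fin r) (hpi : Function.Injective p) (i : Fin c)
    (h : P (p i)) : ((emb d r c hr hd p v ⟨p i, h⟩ : Fin (d (p i))) : ℕ) = (v i : ℕ) := by
  rw [emb]
  have hex : ∃ i', p i' = p i := ⟨i, rfl⟩
  simp only [dif_pos hex]
  have : hex.choose = i := hpi hex.choose_spec
  rw [this]

theorem le_pairTensor_flatteningRank (d : ι → ℕ) (r c : ℕ) (hr : 0 < r) (hd : ∀ l, r ≤ d l)
    (p q : Fin c → ι) (S : Finset ι) (hp : ∀ i, p i ∈ S) (hq : ∀ i, q i ∉ S)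
    (hpi : Function.Injective p) (hqi : Function.Injective q) :
    r ^ c ≤ flatteningRank d S (pairTensor (𝕜 := 𝕜) d r c p q) := by
  classical
  have hsub : (flattening d S (pairTensor (𝕜 := 𝕜) d r c p q)).submatrix
      (fun v : Fin c → Fin r => emb d r c hr hd p (P := fun l => l ∈ S) v)
      (fun v : Fin c → Fin r => emb d r c hr hd q (P := fun l => l ∉ S) v)
      = (1 : Matrix (Fin c → Fin r) (Fin c → Fin r) 𝕜) := by
    ext v v'
    set ρ := emb d r c hr hd p (P := fun l : ι => l ∈ S) v with hρ
    set γ := emb d r c hr hd q (P := fun l : ι => l ∉ S) v' with hγ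
    set X : ∀ l, Fin (d l) := fun l => if h : l ∈ S then ρ ⟨l, h⟩ else γ ⟨l, h⟩ with hXdef
    have hent : (flattening d S (pairTensor (𝕜 := 𝕜) d r c p q)).submatrix
        (fun v : Fin c → Fin r => emb d r c hr hd p (P := fun l => l ∈ S) v)
        (fun v : Fin c → Fin r => emb d r c hr hd q (P := fun l => l ∉ S) v) v v'
        = ∏ i : Fin c, ∑ w : Fin r, (pind r w (X (p i)) : 𝕜) * (pind r w (X (q i)) : 𝕜) := rfl
    rw [hent]
    have hXp : ∀ i : Fin c, ((X (p i) : Fin (d (p i))) : ℕ) = (v i : ℕ) := by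
      intro i
      have h1 : X (p i) = ρ ⟨p i, hp i⟩ := dif_pos (hp i)
      rw [h1, hρ]
      exact emb_val d r c hr hd p v hpi i (hp i)
    have hXq : ∀ i : Fin c, ((X (q i) : Fin (d (q i))) : ℕ) = (v' i : ℕ) := by
      intro i
      have h1 : X (q i) = γ ⟨q i, hq i⟩ := dif_neg (hq i)
      rw [h1, hγ]
      exact emb_val d r c hr hd q v' hqi i (hq i)
    have hterm : ∀ i : Fin c, (∑ w : Fin r,
        (pind r w (X (p i)) : 𝕜) * (pind r w (X (q i)) : 𝕜))
        = if v i = v' i then 1 else 0 := by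
      intro i
      have hw : ∀ w : Fin r, (pind r w (X (p i)) : 𝕜) * (pind r w (X (q i)) : 𝕜)
          = (if (v i : ℕ) = (w : ℕ) then 1 else 0) * (if (v' i : ℕ) = (w : ℕ) then 1 else 0) := by
        intro w
        rw [pind, pind, hXp i, hXq i]
        simp
      rw [Finset.sum_congr rfl (fun w _ => hw w)]
      rw [Finset.sum_eq_single (v i)]
      · simp [Fin.val_eq_val, eq_comm]
      · intro w _ hww
        have : ¬((v i : ℕ) = (w : ℕ)) := by
          simp only [Fin.val_eq_val]
          exact fun h => hww h.symm
        simp [this]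
      · intro h
        exact absurd (Finset.mem_univ _) h
    rw [Finset.prod_congr rfl (fun i _ => hterm i)]
    by_cases h : v = v'
    · subst h
      simp [Matrix.one_apply]
    · obtain ⟨i, hi⟩ := Function.ne_iff.mp h
      rw [Finset.prod_eq_zero (Finset.mem_univ i) (by simp [hi]), Matrix.one_apply_ne h]
  calc r ^ c = Fintype.card (Fin c → Fin r) := by
        rw [Fintype.card_fun, Fintype.card_fin, Fintype.card_fin]
    _ = (1 : Matrix (Fin c → Fin r) (Fin c → Fin r) 𝕜).rank := (Matrix.rank_one).symm
    _ ≤ (flattening d S (pairTensor (𝕜 := 𝕜) d r c p q)).rank := by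
        rw [← hsub]
        exact rank_submatrix_le' _ _ _
    _ = flatteningRank d S (pairTensor (𝕜 := 𝕜) d r c p q) := rfl

end PairTensor


/-- Hackbusch's conjecture: `HF(r, k) ⊄ TT(r^⌈k/2⌉ − 1, 2^k)` for any ordering of the
leaves of the train-track tree.  Leaves are indexed by `Fin (2^k)`, zero-based: the dyadic
interval `{m·2^s + 1, …, (m+1)·2^s}` becomes `{i | m·2^s ≤ i < (m+1)·2^s}` and the
σ-initial segment `{σ(1), …, σ(j)}` becomes `{σ(0), …, σ(j−1)} = {l | σ⁻¹(l) < j}`. -/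
theorem stmt_19 {𝕜 : Type*} [Field 𝕜] (k r : ℕ) (hk : 1 ≤ k) (hr : 2 ≤ r)
    (d : Fin (2 ^ k) → ℕ) (hd : ∀ i, r ≤ d i)
    (σ : Equiv.Perm (Fin (2 ^ k))) :
    ∃ t : (∀ i, Fin (d i)) → 𝕜,
      (∀ m s : ℕ, (m + 1) * 2 ^ s ≤ 2 ^ k →
        flatteningRank d (Finset.univ.filter fun i : Fin (2 ^ k) =>
          m * 2 ^ s ≤ (i : ℕ) ∧ (i : ℕ) < (m + 1) * 2 ^ s) t ≤ r) ∧
      ∃ j : ℕ, 1 ≤ j ∧ j ≤ 2 ^ k ∧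
        r ^ ((k + 1) / 2) ≤
          flatteningRank d (Finset.univ.filter fun l : Fin (2 ^ k) =>
            ((σ.symm l : ℕ) < j)) t := by
  classical
  set g : Fin (2^k) → ℕ := fun l => (σ.symm l : ℕ) with hgdef
  have hg : Function.Injective g := by
    intro a b hab
    exact σ.symm.injective (Fin.val_injective hab)
  obtain ⟨L, J, hlen, hiv, hJ, hsplit, hpw⟩ :=
    key k g hg k hk 0 (by simp)
  have hgetR := List.pairwise_iff_get.mp hpw
  have hpi : Function.Injective (fun i : Fin L.length => (L.get i).1) := by
    intro i i' h
    by_contra hne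
    rcases lt_or_gt_of_ne hne with hlt | hlt
    · exact (hgetR i i' hlt).1 h
    · exact (hgetR i' i hlt).1 h.symm
  have hqi : Function.Injective (fun i : Fin L.length => (L.get i).2) := by
    intro i i' h
    by_contra hne
    rcases lt_or_gt_of_ne hne with hlt | hlt
    · exact (hgetR i i' hlt).2.2.2 h
    · exact (hgetR i' i hlt).2.2.2 h.symm
  have hgetinj : ∀ i i' : Fin L.length, L.get i = L.get i' → i = i' := by
    intro i i' h
    exact hpi (congrArg Prod.fst h)
  refine ⟨pairTensor d r L.length (fun i => (L.get i).1) (fun i => (L.get i).2), ?_, ?_⟩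
  · -- dyadic intervals : rank at most r
    intro m s hms
    set S : Finset (Fin (2^k)) := Finset.univ.filter fun i : Fin (2 ^ k) =>
      m * 2 ^ s ≤ (i : ℕ) ∧ (i : ℕ) < (m + 1) * 2 ^ s with hS
    have hmem : ∀ l : Fin (2^k), l ∈ S ↔ inIv s m (l : ℕ) := by
      intro l
      simp [hS, inIv]
    have hb := pairTensor_flatteningRank_le (𝕜 := 𝕜) d r L.length
      (fun i => (L.get i).1) (fun i => (L.get i).2) S
    have hcard : (Finset.univ.filter
        (fun i : Fin L.length => ((L.get i).1 ∈ S ∧ (L.get i).2 ∉ S) ∨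
          ((L.get i).1 ∉ S ∧ (L.get i).2 ∈ S))).card ≤ 1 := by
      apply Finset.card_le_one.mpr
      intro i hi i' hi'
      rw [Finset.mem_filter] at hi hi'
      have hsp : splits s m (((L.get i).1 : ℕ), ((L.get i).2 : ℕ)) := by
        rcases hi.2 with ⟨h1, h2⟩ | ⟨h1, h2⟩
        · exact Or.inl ⟨(hmem _).mp h1, fun hin => h2 ((hmem _).mpr hin)⟩
        · exact Or.inr ⟨fun hin => h1 ((hmem _).mpr hin), (hmem _).mp h2⟩
      have hsp' : splits s m (((L.get i').1 : ℕ), ((L.get i').2 : ℕ)) := by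
        rcases hi'.2 with ⟨h1, h2⟩ | ⟨h1, h2⟩
        · exact Or.inl ⟨(hmem _).mp h1, fun hin => h2 ((hmem _).mpr hin)⟩
        · exact Or.inr ⟨fun hin => h1 ((hmem _).mpr hin), (hmem _).mp h2⟩
      exact hgetinj i i'
        (hsplit s m (L.get i) (L.get_mem i) (L.get i') (L.get_mem i') hsp hsp')
    calc flatteningRank d S (pairTensor d r L.length
          (fun i => (L.get i).1) (fun i => (L.get i).2))
        ≤ r ^ (Finset.univ.filter
          (fun i : Fin L.length => ((L.get i).1 ∈ S ∧ (L.get i).2 ∉ S) ∨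
            ((L.get i).1 ∉ S ∧ (L.get i).2 ∈ S))).card := hb
      _ ≤ r ^ 1 := Nat.pow_le_pow_right (by omega) hcard
      _ = r := pow_one r
  · -- the σ-initial segment of length J : rank at least r^((k+1)/2)
    have hLne : L ≠ [] := by
      intro h
      rw [h] at hlen
      simp at hlen
      omega
    obtain ⟨pr0, hpr0⟩ := List.exists_mem_of_ne_nil L hLne
    have hJ0 := hJ pr0 hpr0
    have hv : g pr0.2 < 2^k := (σ.symm pr0.2).isLt
    refine ⟨J, by omega, by omega, ?_⟩
    set S : Finset (Fin (2^k)) := Finset.univ.filter fun l : Fin (2 ^ k) =>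
      ((σ.symm l : ℕ) < J) with hS
    have hp : ∀ i : Fin L.length, (L.get i).1 ∈ S := by
      intro i
      rw [hS, Finset.mem_filter]
      exact ⟨Finset.mem_univ _, (hJ (L.get i) (L.get_mem i)).1⟩
    have hq : ∀ i : Fin L.length, (L.get i).2 ∉ S := by
      intro i hin
      rw [hS, Finset.mem_filter] at hin
      have h1 : (σ.symm (L.get i).2 : ℕ) < J := hin.2
      have h2 : J ≤ g (L.get i).2 := (hJ (L.get i) (L.get_mem i)).2
      have h3 : g (L.get i).2 = (σ.symm (L.get i).2 : ℕ) := rfl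
      omega
    have hlow := le_pairTensor_flatteningRank (𝕜 := 𝕜) d r L.length (by omega) hd
      (fun i => (L.get i).1) (fun i => (L.get i).2) S hp hq hpi hqi
    calc r ^ ((k + 1) / 2) = r ^ L.length := by rw [hlen]
      _ ≤ _ := hlow
end
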